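/- arXiv:2401.13971 — 8 statements merged into one kernel-verified Lean document; each statement's English description precedes it below -/
import Mathlib

section
/- One-step descent under standard Lipschitz continuity: Let ρ > κ + τ and γ > ρ. Let x ∈ ℝⁿ be fixed and let x⁺(ξ) = argmin_y { f_x(y,ξ) + ω(y) + (γ/2)‖y − x‖² } for a sample ξ ∼ Ξ. Then E_ξ[ψ_{1/ρ}(x⁺(ξ))] ≤ ψ_{1/ρ}(x) − (ρ(ρ − τ − κ)/(2(γ − κ)))‖x̂ − x‖² + 2ρL_f²/((γ − ρ)(γ − κ)), where x̂ = prox_{ψ/ρ}(x). -/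
open MeasureTheory

open RealInnerProductSpace

section OneStepAux
variable {E : Type*} [NormedAddCommGroup E] [InnerProductSpace ℝ E]

lemma one_step_comb_norm_sq (a b : E) (t : ℝ) :
    ‖(1-t) • a + t • b‖ ^ 2
      = (1-t) * ‖a‖ ^ 2 + t * ‖b‖ ^ 2 - t * (1-t) * ‖b - a‖ ^ 2 := by
  have h1 : ‖(1-t) • a + t • b‖ ^ 2 = ⟪(1-t) • a + t • b, (1-t) • a + t • b⟫ :=
    (real_inner_self_eq_norm_sq _).symm
  have h2 : ‖a‖^2 = ⟪a,a⟫ := (real_inner_self_eq_norm_sq _).symm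
  have h3 : ‖b‖^2 = ⟪b,b⟫ := (real_inner_self_eq_norm_sq _).symm
  have h4 : ‖b-a‖^2 = ⟪b-a,b-a⟫ := (real_inner_self_eq_norm_sq _).symm
  rw [h1, h2, h3, h4]
  simp only [inner_add_add_self, inner_sub_sub_self, real_inner_smul_left,
    real_inner_smul_right, real_inner_comm a b]
  ring

lemma one_step_strong_min (g c : E → ℝ) (m : ℝ)
    (hgc : ∀ y, g y = c y + m/2 * ‖y‖^2)
    (hc : ConvexOn ℝ Set.univ c)
    (p : E) (hp : ∀ y, g p ≤ g y) (y : E) :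
    g p + m/2 * ‖y - p‖^2 ≤ g y := by
  by_contra hcon
  push_neg at hcon
  have hD0 : 0 ≤ g y - g p := sub_nonneg.2 (hp y)
  have hC0 : 0 < m/2 * ‖y-p‖^2 := by linarith
  set C := m/2 * ‖y-p‖^2 with hC
  set D := g y - g p with hD
  set t := (C - D)/(2*C) with ht
  clear_value t C D
  have hCD : D < C := by rw [hD]; linarith [hcon]
  have ht0 : 0 < t := by
    rw [ht]; exact div_pos (by linarith) (by linarith)
  have ht1 : t < 1 := by
    rw [ht, div_lt_one (by linarith)]; linarith
  have hcomb := hc.2 (Set.mem_univ p) (Set.mem_univ y)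
    (by linarith : (0:ℝ) ≤ 1 - t) ht0.le (by ring)
  have hmin := hp ((1-t) • p + t • y)
  rw [hgc ((1-t) • p + t • y), hgc p, hgc y, one_step_comb_norm_sq p y t] at *
  simp only [smul_eq_mul] at hcomb
  have hsum : c p + m/2*‖p‖^2 ≤ (1-t)*(c p) + t*(c y)
      + m/2*((1-t)*‖p‖^2 + t*‖y‖^2 - t*(1-t)*‖y-p‖^2) := by linarith [hcomb, hmin]
  have h' : t * (c p + m/2*‖p‖^2 + m/2*(1-t)*‖y-p‖^2) ≤ t * (c y + m/2*‖y‖^2) := by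
    nlinarith [hsum]
  have h2 := le_of_mul_le_mul_left h' ht0
  have htC : t * C = (C - D)/2 := by
    rw [ht]; field_simp
  nlinarith [h2, htC, hCD, hC, hD]

lemma one_step_affine_convex (x0 : E) (a co : ℝ) :
    ConvexOn ℝ Set.univ (fun y => a + co * ⟪y, x0⟫) := by
  refine ⟨convex_univ, fun u _ v _ s t hs ht hst => ?_⟩
  simp only [inner_add_left, real_inner_smul_left, smul_eq_mul]
  apply le_of_eq
  linear_combination (-a) * hst

end OneStepAux

set_option maxHeartbeats 1000000 in
/-- **Lemma 1** (one-step descent under standard Lipschitz continuity).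
Stochastic model-based minimization of `ψ = f + w`, where `w` is `κ`-weakly convex and
`L_ω`-Lipschitz, the stochastic models `fmod xary` are convex, unbiased at the center,
`τ/2`-accurate in expectation, and uniformly `L_f(ξ)`-Lipschitz (assumption B1).
If `ρ > κ + τ`, `γ > ρ`, and `x⁺(ξ)` is the minimizer of the regularized model at `x`,
then `E_ξ[ψ_{1/ρ}(x⁺(ξ))] ≤ ψ_{1/ρ}(x) - ρ(ρ-τ-κ)/(2(γ-κ)) ‖x̂-x‖² + 2ρL_f²/((γ-ρ)(γ-κ))`. -/
theorem one_step_descent_standard_lipschitz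
    {n : ℕ} {S : Type*} [MeasurableSpace S] (μ : Measure S) [IsProbabilityMeasure μ]
    (f w ψ : EuclideanSpace ℝ (Fin n) → ℝ)
    (fmod : EuclideanSpace ℝ (Fin n) → EuclideanSpace ℝ (Fin n) → S → ℝ)
    (Lfs : S → ℝ) (κ τ ρ γ Lf Lw : ℝ)
    (prox : EuclideanSpace ℝ (Fin n) → EuclideanSpace ℝ (Fin n))
    (moreau : EuclideanSpace ℝ (Fin n) → ℝ)
    -- basic parameter assumptions
    (hκ : 0 ≤ κ) (hτ : 0 ≤ τ) (hρ : κ + τ < ρ) (hγ : ρ < γ)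
    (hLf : 0 ≤ Lf) (hLw : 0 ≤ Lw)
    -- composite objective
    (hψdef : ∀ x, ψ x = f x + w x)
    -- A2: `w` is κ-weakly convex and L_ω-Lipschitz
    (hw_weak : ConvexOn ℝ Set.univ (fun x => w x + κ / 2 * ‖x‖ ^ 2))
    (hw_lip : ∀ x y, |w x - w y| ≤ Lw * ‖x - y‖)
    -- A3: properties of the stochastic model
    (hmodel_conv : ∀ x s, ConvexOn ℝ Set.univ (fun y => fmod x y s))
    (hmodel_int : ∀ x y, Integrable (fun s => fmod x y s) μ)
    (hmodel_center : ∀ x, ∫ s, fmod x x s ∂μ = f x)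
    (hmodel_acc : ∀ x y, (∫ s, fmod x y s ∂μ) - f y ≤ τ / 2 * ‖x - y‖ ^ 2)
    -- B1: standard Lipschitz continuity of the models, and its consequence for `f`
    (hB1 : ∀ x y z s, fmod x y s - fmod x z s ≤ Lfs s * ‖y - z‖)
    (hLfs_int : Integrable (fun s => Lfs s ^ 2) μ)
    (hLfs_bound : ∫ s, Lfs s ^ 2 ∂μ ≤ Lf ^ 2)
    (hf_lip : ∀ x y, f x - f y ≤ Lf * ‖x - y‖)
    -- Moreau envelope `ψ_{1/ρ}` and proximal mapping `prox = prox_{ψ/ρ}`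
    (hprox : ∀ x z, ψ (prox x) + ρ / 2 * ‖prox x - x‖ ^ 2 ≤ ψ z + ρ / 2 * ‖z - x‖ ^ 2)
    (hmoreau : ∀ x, moreau x = ψ (prox x) + ρ / 2 * ‖prox x - x‖ ^ 2)
    -- the current point and the stochastic one-step update
    (x : EuclideanSpace ℝ (Fin n)) (xplus : S → EuclideanSpace ℝ (Fin n))
    (hupdate : ∀ s y,
      fmod x (xplus s) s + w (xplus s) + γ / 2 * ‖xplus s - x‖ ^ 2
        ≤ fmod x y s + w y + γ / 2 * ‖y - x‖ ^ 2)
    (hint : Integrable (fun s => moreau (xplus s)) μ) :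
    ∫ s, moreau (xplus s) ∂μ
      ≤ moreau x - ρ * (ρ - τ - κ) / (2 * (γ - κ)) * ‖prox x - x‖ ^ 2
        + 2 * ρ * Lf ^ 2 / ((γ - ρ) * (γ - κ)) := by
  have hρ0 : 0 < ρ := by linarith
  have hγρ : 0 < γ - ρ := by linarith
  have hγκ : 0 < γ - κ := by linarith
  have hq : ‖x - prox x‖ = ‖prox x - x‖ := norm_sub_rev _ _
  -- pointwise key inequality
  have hpt : ∀ s, moreau (xplus s) ≤ ψ (prox x) + ρ/(γ-κ) *
      ((fmod x (prox x) s - fmod x x s) + (Lfs s^2)/(γ-ρ)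
        + (f x - f (prox x) + Lf^2/(γ-ρ) + (γ-ρ)/2*‖prox x - x‖^2)) := by
    intro s
    have hstrong := one_step_strong_min
      (fun y => fmod x y s + w y + γ / 2 * ‖y - x‖ ^ 2)
      (fun y => fmod x y s + (w y + κ / 2 * ‖y‖ ^ 2) + (γ/2*‖x‖^2 + (-γ) * ⟪y, x⟫))
      (γ - κ)
      (fun y => by
        have := norm_sub_sq_real y x
        linear_combination (γ/2) * this)
      (((hmodel_conv x s).add hw_weak).add (one_step_affine_convex x (γ/2*‖x‖^2) (-γ)))
      (xplus s) (fun y => hupdate s y) (prox x)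
    -- Lipschitz bound on the model at the center
    have hBa : fmod x x s - fmod x (xplus s) s ≤ |Lfs s| * ‖xplus s - x‖ := by
      have h := hB1 x x (xplus s) s
      have h2 : Lfs s * ‖xplus s - x‖ ≤ |Lfs s| * ‖xplus s - x‖ :=
        mul_le_mul_of_nonneg_right (le_abs_self _) (norm_nonneg _)
      rw [norm_sub_rev] at h
      linarith
    -- Young's inequalities
    have hY1 : |Lfs s| * ‖xplus s - x‖ ≤ Lfs s^2/(γ-ρ) + (γ-ρ)/4*‖xplus s - x‖^2 := by
      refine le_of_mul_le_mul_right ?_ hγρ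
      have hexp : (Lfs s^2/(γ-ρ) + (γ-ρ)/4*‖xplus s - x‖^2) * (γ-ρ)
          = Lfs s^2 + (γ-ρ)^2/4*‖xplus s - x‖^2 := by
        field_simp
      rw [hexp]
      nlinarith [sq_nonneg (|Lfs s| - (γ-ρ)/2 * ‖xplus s - x‖), sq_abs (Lfs s)]
    have hY2 : Lf * ‖xplus s - x‖ ≤ Lf^2/(γ-ρ) + (γ-ρ)/4*‖xplus s - x‖^2 := by
      refine le_of_mul_le_mul_right ?_ hγρ
      have hexp : (Lf^2/(γ-ρ) + (γ-ρ)/4*‖xplus s - x‖^2) * (γ-ρ)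
          = Lf^2 + (γ-ρ)^2/4*‖xplus s - x‖^2 := by
        field_simp
      rw [hexp]
      nlinarith [sq_nonneg (Lf - (γ-ρ)/2 * ‖xplus s - x‖)]
    have hflip : f (xplus s) - f x ≤ Lf * ‖xplus s - x‖ := hf_lip _ _
    have hproxc := hprox x (xplus s)
    have hψ1 := hψdef (prox x)
    have hψ2 := hψdef (xplus s)
    have hmain : (γ-κ)/2 * ‖prox x - xplus s‖^2 ≤
        (fmod x (prox x) s - fmod x x s) + (Lfs s^2)/(γ-ρ)
        + (f x - f (prox x) + Lf^2/(γ-ρ) + (γ-ρ)/2*‖prox x - x‖^2) := by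
      linarith [hstrong, hBa, hY1, hY2, hflip, hproxc]
    have hmor : moreau (xplus s) ≤ ψ (prox x) + ρ/2 * ‖prox x - xplus s‖^2 := by
      rw [hmoreau (xplus s)]
      exact hprox (xplus s) (prox x)
    have hscale : ρ/2 * ‖prox x - xplus s‖^2
        = ρ/(γ-κ) * ((γ-κ)/2 * ‖prox x - xplus s‖^2) := by
      field_simp
    have hnn : 0 ≤ ρ/(γ-κ) := le_of_lt (div_pos hρ0 hγκ)
    calc moreau (xplus s) ≤ ψ (prox x) + ρ/2 * ‖prox x - xplus s‖^2 := hmor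
      _ = ψ (prox x) + ρ/(γ-κ) * ((γ-κ)/2 * ‖prox x - xplus s‖^2) := by rw [hscale]
      _ ≤ _ := by
          have := mul_le_mul_of_nonneg_left hmain hnn
          linarith
  -- integrability of the majorant
  have hFint : Integrable (fun s => (fmod x (prox x) s - fmod x x s) + (Lfs s^2)/(γ-ρ)
      + (f x - f (prox x) + Lf^2/(γ-ρ) + (γ-ρ)/2*‖prox x - x‖^2)) μ :=
    (((hmodel_int x (prox x)).sub (hmodel_int x x)).add (hLfs_int.div_const _)).add
      (integrable_const _)
  have hRint : Integrable (fun s => ψ (prox x) + ρ/(γ-κ) *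
      ((fmod x (prox x) s - fmod x x s) + (Lfs s^2)/(γ-ρ)
        + (f x - f (prox x) + Lf^2/(γ-ρ) + (γ-ρ)/2*‖prox x - x‖^2))) μ :=
    (integrable_const _).add (hFint.const_mul _)
  have h1 : ∫ s, moreau (xplus s) ∂μ ≤ ∫ s, (ψ (prox x) + ρ/(γ-κ) *
      ((fmod x (prox x) s - fmod x x s) + (Lfs s^2)/(γ-ρ)
        + (f x - f (prox x) + Lf^2/(γ-ρ) + (γ-ρ)/2*‖prox x - x‖^2))) ∂μ :=
    integral_mono hint hRint hpt
  rw [integral_add (integrable_const _) (hFint.const_mul _), integral_const,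
    integral_const_mul] at h1
  simp only [measure_univ, ENNReal.toReal_one, one_smul, probReal_univ] at h1
  -- bound the integral of the majorant
  have hFval : ∫ s, ((fmod x (prox x) s - fmod x x s) + (Lfs s^2)/(γ-ρ)
      + (f x - f (prox x) + Lf^2/(γ-ρ) + (γ-ρ)/2*‖prox x - x‖^2)) ∂μ
      ≤ τ/2*‖prox x - x‖^2 + (γ-ρ)/2*‖prox x - x‖^2 + 2*Lf^2/(γ-ρ) := by
    have hI1 : Integrable (fun s => fmod x (prox x) s - fmod x x s) μ :=
      (hmodel_int x (prox x)).sub (hmodel_int x x)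
    have hI2 : Integrable (fun s => Lfs s^2/(γ-ρ)) μ := hLfs_int.div_const _
    have hI12 : Integrable (fun s => (fmod x (prox x) s - fmod x x s)
        + (Lfs s^2)/(γ-ρ)) μ := hI1.add hI2
    rw [integral_add hI12 (integrable_const _),
      integral_add hI1 hI2,
      integral_sub (hmodel_int x (prox x)) (hmodel_int x x),
      integral_div, hmodel_center, integral_const]
    simp only [measure_univ, ENNReal.toReal_one, one_smul, probReal_univ]
    have hacc := hmodel_acc x (prox x)
    have hsq : ‖x - prox x‖^2 = ‖prox x - x‖^2 := by rw [hq]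
    have hdiv : (∫ s, Lfs s^2 ∂μ)/(γ-ρ) ≤ Lf^2/(γ-ρ) := by
      exact div_le_div_of_nonneg_right hLfs_bound hγρ.le
    rw [hsq] at hacc
    have h2 : (2:ℝ) * Lf ^ 2 / (γ - ρ) = Lf ^ 2 / (γ - ρ) + Lf ^ 2 / (γ - ρ) := by
      ring
    rw [h2]
    linarith [hacc, hdiv]
  -- combine
  have hnn : 0 ≤ ρ/(γ-κ) := le_of_lt (div_pos hρ0 hγκ)
  have h2 := mul_le_mul_of_nonneg_left hFval hnn
  have hiden : ψ (prox x) + ρ/(γ-κ) * (τ/2*‖prox x - x‖^2 + (γ-ρ)/2*‖prox x - x‖^2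
      + 2*Lf^2/(γ-ρ))
      = (ψ (prox x) + ρ/2*‖prox x - x‖^2)
        - ρ * (ρ - τ - κ) / (2 * (γ - κ)) * ‖prox x - x‖ ^ 2
        + 2 * ρ * Lf ^ 2 / ((γ - ρ) * (γ - κ)) := by
    field_simp
    ring
  rw [hmoreau x]
  linarith [h1, h2, hiden]
end

section
/- Convergence rate under standard Lipschitz continuity: Let ρ > κ + τ and run the stochastic model-based method x^{k+1} = argmin_x { f_{x^k}(x,ξ^k) + ω(x) + (γ_k/2)‖x − x^k‖² } with i.i.d. samples ξ^k ∼ Ξ and constant stepsize γ_k ≡ ρ + κ + α√K for some α > 0. Then min_{1≤k≤K} E[‖∇ψ_{1/ρ}(x^k)‖²] ≤ (2ρ/(ρ − τ − κ)) [ ρD/K + (1/√K)( αD + 2ρL_f²/α ) ], where D = ψ(x¹) − inf_x ψ(x). -/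
open MeasureTheory

private lemma norm_combo {E : Type*} [NormedAddCommGroup E] [InnerProductSpace ℝ E]
    (u v : E) (t : ℝ) :
    ‖(1-t)•u + t•v‖^2 = (1-t)*‖u‖^2 + t*‖v‖^2 - t*(1-t)*‖u-v‖^2 := by
  have h1 := norm_add_sq_real ((1-t)•u) (t•v)
  have h2 := norm_sub_sq_real u v
  have h3 : ‖(1-t)•u‖^2 = (1-t)^2*‖u‖^2 := by
    rw [norm_smul, Real.norm_eq_abs, mul_pow, sq_abs]
  have h4 : ‖t•v‖^2 = t^2*‖v‖^2 := by
    rw [norm_smul, Real.norm_eq_abs, mul_pow, sq_abs]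
  have h5 : (inner ℝ ((1-t)•u) (t•v)) = (1-t)*(t*(inner ℝ u v)) := by
    rw [real_inner_smul_left, real_inner_smul_right]
  rw [h1, h3, h4, h5, h2]; ring

private lemma strong_min {E : Type*} [NormedAddCommGroup E] [InnerProductSpace ℝ E]
    {Φ : E → ℝ} (hΦ : ConvexOn ℝ Set.univ Φ) {m : ℝ} (hm : 0 < m) {x xp : E}
    (hmin : ∀ y, Φ xp + m/2*‖xp - x‖^2 ≤ Φ y + m/2*‖y - x‖^2) (y : E) :
    Φ xp + m/2*‖xp - x‖^2 + m/2*‖y - xp‖^2 ≤ Φ y + m/2*‖y - x‖^2 := by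
  have hc : (0:ℝ) ≤ m/2*‖y - xp‖^2 := by positivity
  have key : ∀ t : ℝ, 0 < t → t < 1 →
      Φ xp + m/2*‖xp - x‖^2 + (1-t)*(m/2*‖y - xp‖^2) ≤ Φ y + m/2*‖y - x‖^2 := by
    intro t ht0 ht1
    have h1 : Φ ((1-t)•xp + t•y) ≤ (1-t)*Φ xp + t*Φ y :=
      hΦ.2 (Set.mem_univ xp) (Set.mem_univ y) (by linarith) ht0.le (by ring)
    have h2 : ‖(1-t)•xp + t•y - x‖^2
        = (1-t)*‖xp - x‖^2 + t*‖y - x‖^2 - t*(1-t)*‖y - xp‖^2 := by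
      have hz : (1-t)•xp + t•y - x = (1-t)•(xp - x) + t•(y - x) := by module
      rw [hz, norm_combo, show (xp - x) - (y - x) = xp - y by abel, norm_sub_rev xp y]
    have h3 := hmin ((1-t)•xp + t•y)
    rw [h2] at h3
    have key0 : t*(Φ xp + m/2*‖xp - x‖^2 + (1-t)*(m/2*‖y - xp‖^2))
        ≤ t*(Φ y + m/2*‖y - x‖^2) := by nlinarith [h1, h3]
    exact le_of_mul_le_mul_left key0 ht0
  refine le_of_forall_pos_le_add fun ε hε => ?_
  set c := m/2*‖y - xp‖^2 with hcdef
  have ht0 : 0 < min (1/2) (ε/(c+1)) := lt_min (by norm_num) (div_pos hε (by linarith))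
  have ht1 : min (1/2) (ε/(c+1)) < 1 := lt_of_le_of_lt (min_le_left _ _) (by norm_num)
  have h := key _ ht0 ht1
  have htc : (min (1/2) (ε/(c+1)))*c ≤ ε := by
    calc (min (1/2) (ε/(c+1)))*c ≤ (ε/(c+1))*c :=
          mul_le_mul_of_nonneg_right (min_le_right _ _) hc
    _ ≤ ε := by rw [div_mul_eq_mul_div, div_le_iff₀ (by linarith)]; nlinarith
  linarith

private lemma onestep {E : Type*} [NormedAddCommGroup E] [InnerProductSpace ℝ E]
    (f w ψ : E → ℝ) (F : E → ℝ) (ℓ κ ρ Lf G g : ℝ)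
    (prox : E → E) (moreau : E → ℝ)
    (hGpos : 0 < G) (hgpos : 0 < g) (hρ0 : 0 < ρ)
    (hGg : G + κ = ρ + g)
    (hψdef : ∀ x, ψ x = f x + w x)
    (hw_weak : ConvexOn ℝ Set.univ (fun x => w x + κ / 2 * ‖x‖ ^ 2))
    (hF_conv : ConvexOn ℝ Set.univ F)
    (hB1 : ∀ y z, F y - F z ≤ ℓ * ‖y - z‖)
    (hf_lip : ∀ x y, f x - f y ≤ Lf * ‖x - y‖)
    (hprox : ∀ x z, ψ (prox x) + ρ / 2 * ‖prox x - x‖ ^ 2 ≤ ψ z + ρ / 2 * ‖z - x‖ ^ 2)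
    (hmoreau : ∀ x, moreau x = ψ (prox x) + ρ / 2 * ‖prox x - x‖ ^ 2)
    (x xp : E)
    (hup : ∀ y, F xp + w xp + (κ + G)/2 * ‖xp - x‖^2 ≤ F y + w y + (κ + G)/2 * ‖y - x‖^2) :
    moreau xp ≤ moreau x - ρ/2 * ‖x - prox x‖^2
      + ρ/G * ((F (prox x) - F x + (f x - f (prox x)))
        + ((Lf^2 + ℓ^2)/g + g/2 * ‖x - prox x‖^2)) := by
  have haff : ConvexOn ℝ Set.univ (fun y : E => κ/2*‖y - x‖^2 - κ/2*‖y‖^2) := by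
    have heq : (fun y : E => κ/2*‖y - x‖^2 - κ/2*‖y‖^2)
        = fun y => κ/2*‖x‖^2 - κ * (inner ℝ y x) := by
      funext y
      rw [norm_sub_sq_real]
      ring
    rw [heq]
    refine ⟨convex_univ, fun a _ b _ p q hp hq hpq => le_of_eq ?_⟩
    beta_reduce
    rw [inner_add_left, real_inner_smul_left, real_inner_smul_left, smul_eq_mul, smul_eq_mul]
    linear_combination (κ/2*‖x‖^2) * hpq.symm
  have hΦ : ConvexOn ℝ Set.univ
      (fun y : E => (F y + (w y + κ/2*‖y‖^2)) + (κ/2*‖y - x‖^2 - κ/2*‖y‖^2)) := by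
    have h2 : ConvexOn ℝ Set.univ (fun y : E => w y + κ/2*‖y‖^2) := hw_weak
    exact (hF_conv.add h2).add haff
  have hmin : ∀ y : E,
      ((F xp + (w xp + κ/2*‖xp‖^2)) + (κ/2*‖xp - x‖^2 - κ/2*‖xp‖^2)) + G/2*‖xp - x‖^2
        ≤ ((F y + (w y + κ/2*‖y‖^2)) + (κ/2*‖y - x‖^2 - κ/2*‖y‖^2)) + G/2*‖y - x‖^2 := by
    intro y
    have h := hup y
    nlinarith [h]
  have hsc : ((F xp + (w xp + κ/2*‖xp‖^2)) + (κ/2*‖xp - x‖^2 - κ/2*‖xp‖^2)) + G/2*‖xp - x‖^2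
        + G/2*‖prox x - xp‖^2
      ≤ ((F (prox x) + (w (prox x) + κ/2*‖prox x‖^2))
          + (κ/2*‖prox x - x‖^2 - κ/2*‖prox x‖^2)) + G/2*‖prox x - x‖^2 :=
    strong_min hΦ hGpos hmin (prox x)
  have hd := hprox x xp
  rw [hψdef, hψdef] at hd
  have he1 : F x - F xp ≤ ℓ * ‖xp - x‖ := by
    have := hB1 x xp
    rwa [norm_sub_rev] at this
  have he2 : f xp - f x ≤ Lf * ‖xp - x‖ := hf_lip xp x
  have hyoung : (Lf + ℓ) * ‖xp - x‖ - g/2 * ‖xp - x‖^2 ≤ (Lf^2 + ℓ^2)/g := by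
    rw [le_div_iff₀ hgpos]
    nlinarith [sq_nonneg (Lf + ℓ - g * ‖xp - x‖), sq_nonneg (Lf - ℓ), hgpos, sq_nonneg ‖xp - x‖]
  have hrev : ‖prox x - x‖^2 = ‖x - prox x‖^2 := by rw [norm_sub_rev]
  have hcomb : G/2 * ‖prox x - xp‖^2
      ≤ (F (prox x) - F x + (f x - f (prox x))) + ((Lf^2 + ℓ^2)/g + g/2 * ‖x - prox x‖^2) := by
    have hGg1 : (G + κ)*‖x - prox x‖^2 = (ρ + g)*‖x - prox x‖^2 := by rw [hGg]
    have hGg2 : (G + κ)*‖xp - x‖^2 = (ρ + g)*‖xp - x‖^2 := by rw [hGg]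
    rw [hrev] at hsc hd
    linarith [hsc, hd, he1, he2, hyoung, hGg1, hGg2]
  have hqpre : ρ/G * (G/2 * ‖prox x - xp‖^2)
      ≤ ρ/G * ((F (prox x) - F x + (f x - f (prox x)))
          + ((Lf^2 + ℓ^2)/g + g/2 * ‖x - prox x‖^2)) :=
    mul_le_mul_of_nonneg_left hcomb (div_nonneg hρ0.le hGpos.le)
  have hqeq : ρ/G * (G/2 * ‖prox x - xp‖^2) = ρ/2 * ‖prox x - xp‖^2 := by
    field_simp
  rw [hqeq] at hqpre
  have ha : moreau xp ≤ ψ (prox x) + ρ/2 * ‖prox x - xp‖^2 := by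
    rw [hmoreau xp]; exact hprox xp (prox x)
  rw [hψdef] at ha
  have hb : moreau x = f (prox x) + w (prox x) + ρ/2 * ‖x - prox x‖^2 := by
    rw [hmoreau x, hψdef, hrev]
  linarith [ha, hb, hqpre]

private lemma map_update_pi {K : ℕ} {S : Type*} [MeasurableSpace S] (μ : Measure S)
    [IsProbabilityMeasure μ] (i : Fin K) :
    Measure.map (fun p : (Fin K → S) × S => Function.update p.1 i p.2)
      ((Measure.pi fun _ : Fin K => μ).prod μ) = Measure.pi fun _ : Fin K => μ := by
  refine (Measure.pi_eq fun A hA => ?_).symm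
  rw [Measure.map_apply measurable_update' (MeasurableSet.univ_pi hA)]
  have hpre : (fun p : (Fin K → S) × S => Function.update p.1 i p.2) ⁻¹' Set.pi Set.univ A
      = (Set.pi Set.univ fun j => if j = i then Set.univ else A j) ×ˢ A i := by
    ext ⟨ω, s⟩
    simp only [Set.mem_preimage, Set.mem_pi, Set.mem_univ, true_implies, Set.mem_prod,
      Function.update_apply]
    constructor
    · intro h
      refine ⟨fun j => ?_, by simpa using h i⟩
      by_cases hj : j = i
      · simp [hj]
      · simpa [hj] using h j
    · rintro ⟨h1, h2⟩ j
      by_cases hj : j = i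
      · subst hj; simpa using h2
      · have := h1 j; simp only [if_neg hj] at this ⊢; exact this
  rw [hpre, Measure.prod_prod, Measure.pi_pi]
  have hμ : ∀ j : Fin K, μ (if j = i then Set.univ else A j) = if j = i then 1 else μ (A j) :=
    fun j => by split_ifs <;> simp
  rw [Finset.prod_congr rfl (fun j _ => hμ j)]
  have h2 : (∏ j : Fin K, if j = i then (1:ENNReal) else μ (A j))
      = ∏ j ∈ Finset.univ.erase i, μ (A j) := by
    rw [← Finset.prod_erase_mul Finset.univ _ (Finset.mem_univ i), if_pos rfl, mul_one]
    exact Finset.prod_congr rfl fun j hj => if_neg (Finset.ne_of_mem_erase hj)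
  rw [h2, Finset.prod_erase_mul Finset.univ _ (Finset.mem_univ i)]


set_option maxHeartbeats 2000000 in
/-- **Theorem 1** (convergence rate under standard Lipschitz continuity).
The stochastic model-based algorithm is run for `K` steps on the product space
`Fin K → S` carrying the i.i.d. product measure: the iterate `X k` (representing `x^{k+1}`,
with `X 0 = x¹`) depends only on the first `k` samples, and `X (k+1)` minimizes the
regularized stochastic model built at `X k` with the `k`-th sample, using the constant
stepsize `γ = ρ + κ + α√K`.  Then
`min_{1≤k≤K} E[‖∇ψ_{1/ρ}(x^k)‖²] ≤ (2ρ/(ρ-τ-κ)) [ρD/K + (αD + 2ρL_f²/α)/√K]`,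
where `D = ψ(x¹) - inf ψ` and `‖∇ψ_{1/ρ}(x)‖ = ρ‖x - prox x‖`. -/
theorem rate_standard_lipschitz
    {n : ℕ} {S : Type*} [MeasurableSpace S] (μ : Measure S) [IsProbabilityMeasure μ]
    (f w ψ : EuclideanSpace ℝ (Fin n) → ℝ)
    (fmod : EuclideanSpace ℝ (Fin n) → EuclideanSpace ℝ (Fin n) → S → ℝ)
    (Lfs : S → ℝ) (κ τ ρ Lf Lw α : ℝ)
    (prox : EuclideanSpace ℝ (Fin n) → EuclideanSpace ℝ (Fin n))
    (moreau : EuclideanSpace ℝ (Fin n) → ℝ)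
    -- basic parameter assumptions
    (hκ : 0 ≤ κ) (hτ : 0 ≤ τ) (hρ : κ + τ < ρ) (hα : 0 < α)
    (hLf : 0 ≤ Lf) (hLw : 0 ≤ Lw)
    -- composite objective, lower bounded
    (hψdef : ∀ x, ψ x = f x + w x)
    (hbdd : BddBelow (Set.range ψ))
    -- A2: `w` is κ-weakly convex and L_ω-Lipschitz
    (hw_weak : ConvexOn ℝ Set.univ (fun x => w x + κ / 2 * ‖x‖ ^ 2))
    (hw_lip : ∀ x y, |w x - w y| ≤ Lw * ‖x - y‖)
    -- A3: properties of the stochastic model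
    (hmodel_conv : ∀ x s, ConvexOn ℝ Set.univ (fun y => fmod x y s))
    (hmodel_int : ∀ x y, Integrable (fun s => fmod x y s) μ)
    (hmodel_center : ∀ x, ∫ s, fmod x x s ∂μ = f x)
    (hmodel_acc : ∀ x y, (∫ s, fmod x y s ∂μ) - f y ≤ τ / 2 * ‖x - y‖ ^ 2)
    -- B1: standard Lipschitz continuity of the models, and its consequence for `f`
    (hB1 : ∀ x y z s, fmod x y s - fmod x z s ≤ Lfs s * ‖y - z‖)
    (hLfs_int : Integrable (fun s => Lfs s ^ 2) μ)
    (hLfs_bound : ∫ s, Lfs s ^ 2 ∂μ ≤ Lf ^ 2)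
    (hf_lip : ∀ x y, f x - f y ≤ Lf * ‖x - y‖)
    -- Moreau envelope `ψ_{1/ρ}` and proximal mapping `prox = prox_{ψ/ρ}`
    (hprox : ∀ x z, ψ (prox x) + ρ / 2 * ‖prox x - x‖ ^ 2 ≤ ψ z + ρ / 2 * ‖z - x‖ ^ 2)
    (hmoreau : ∀ x, moreau x = ψ (prox x) + ρ / 2 * ‖prox x - x‖ ^ 2)
    -- the algorithm: `K` iterations, i.i.d. samples, constant stepsize `ρ + κ + α√K`
    (K : ℕ) (hK : 1 ≤ K)
    (X : ℕ → (Fin K → S) → EuclideanSpace ℝ (Fin n))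
    (x1 : EuclideanSpace ℝ (Fin n)) (hX0 : ∀ ω, X 0 ω = x1)
    (hXmeas : ∀ k, Measurable (X k))
    (hXadapt : ∀ k, ∀ ω ω' : Fin K → S,
      (∀ i : Fin K, (i : ℕ) < k → ω i = ω' i) → X k ω = X k ω')
    (hupdate : ∀ k (hk : k < K) (ω : Fin K → S) (y : EuclideanSpace ℝ (Fin n)),
      fmod (X k ω) (X (k + 1) ω) (ω ⟨k, hk⟩) + w (X (k + 1) ω)
          + (ρ + κ + α * Real.sqrt K) / 2 * ‖X (k + 1) ω - X k ω‖ ^ 2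
        ≤ fmod (X k ω) y (ω ⟨k, hk⟩) + w y
          + (ρ + κ + α * Real.sqrt K) / 2 * ‖y - X k ω‖ ^ 2)
    -- integrability of the relevant functionals of the iterates
    (hint : ∀ k, Integrable (fun ω => ‖X k ω - prox (X k ω)‖ ^ 2)
      (Measure.pi fun _ : Fin K => μ))
    (hmint : ∀ k, Integrable (fun ω => moreau (X k ω)) (Measure.pi fun _ : Fin K => μ)) :
    ∃ k < K,
      (∫ ω, ρ ^ 2 * ‖X k ω - prox (X k ω)‖ ^ 2 ∂(Measure.pi fun _ : Fin K => μ))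
        ≤ 2 * ρ / (ρ - τ - κ)
            * (ρ * (ψ x1 - ⨅ x, ψ x) / K
               + (1 / Real.sqrt K) * (α * (ψ x1 - ⨅ x, ψ x) + 2 * ρ * Lf ^ 2 / α)) := by
  classical
  set ν := (Measure.pi fun _ : Fin K => μ) with hν
  have hK0 : (0:ℝ) < (K:ℝ) := by exact_mod_cast hK
  have hsK : (0:ℝ) < Real.sqrt K := Real.sqrt_pos.2 hK0
  have hKeq : (K:ℝ) = Real.sqrt K * Real.sqrt K := (Real.mul_self_sqrt hK0.le).symm
  have hρ0 : (0:ℝ) < ρ := lt_of_le_of_lt (by linarith) hρ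
  have hαs : 0 < α * Real.sqrt K := mul_pos hα hsK
  have hGpos : 0 < ρ + α * Real.sqrt K := by linarith
  have hgpos : 0 < κ + α * Real.sqrt K := by linarith
  have hrtκ : 0 < ρ - τ - κ := by linarith
  have hinf_le : ∀ z, (⨅ x, ψ x) ≤ ψ z := fun z => ciInf_le hbdd z
  -- the one-step recursion in expectation
  have key : ∀ k, k < K →
      ∫ ω, moreau (X (k+1) ω) ∂ν
        ≤ ∫ ω, moreau (X k ω) ∂ν
          - ρ*(ρ-κ-τ)/(2*(ρ+α*Real.sqrt K)) * ∫ ω, ‖X k ω - prox (X k ω)‖^2 ∂ν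
          + ρ/(ρ+α*Real.sqrt K) * (2*Lf^2/(κ+α*Real.sqrt K)) := by
    intro k hk
    have hΦm : Measurable (fun p : (Fin K → S) × S => Function.update p.1 ⟨k,hk⟩ p.2) :=
      measurable_update'
    have hmap : Measure.map (fun p : (Fin K → S) × S => Function.update p.1 ⟨k,hk⟩ p.2)
        (ν.prod μ) = ν := by rw [hν]; exact map_update_pi μ ⟨k,hk⟩
    have hF : Integrable (fun ω => moreau (X (k+1) ω)) ν := hmint (k+1)
    have hFP : Integrable
        (fun p : (Fin K → S) × S => moreau (X (k+1) (Function.update p.1 ⟨k,hk⟩ p.2)))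
        (ν.prod μ) :=
      (integrable_map_measure (f := fun p : (Fin K → S) × S => Function.update p.1 ⟨k,hk⟩ p.2)
        (g := fun ω => moreau (X (k+1) ω))
        (by rw [hmap]; exact hF.aestronglyMeasurable)
        hΦm.aemeasurable).mp (by rw [hmap]; exact hF)
    have hFub : ∫ ω, moreau (X (k+1) ω) ∂ν
        = ∫ ω, ∫ s, moreau (X (k+1) (Function.update ω ⟨k,hk⟩ s)) ∂μ ∂ν := by
      conv_lhs => rw [← hmap]
      rw [integral_map hΦm.aemeasurable (by rw [hmap]; exact hF.aestronglyMeasurable)]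
      exact integral_prod _ hFP
    have hae := hFP.prod_right_ae
    have hXeq : ∀ (ω : Fin K → S) (s : S), X k (Function.update ω ⟨k,hk⟩ s) = X k ω := by
      intro ω s
      refine hXadapt k _ _ (fun j hj => ?_)
      refine Function.update_of_ne (fun hji : j = ⟨k,hk⟩ => ?_) _ _
      rw [hji] at hj
      exact absurd hj (by simp)
    have hinner : ∀ᵐ ω ∂ν, ∫ s, moreau (X (k+1) (Function.update ω ⟨k,hk⟩ s)) ∂μ
        ≤ moreau (X k ω) - ρ*(ρ-κ-τ)/(2*(ρ+α*Real.sqrt K)) * ‖X k ω - prox (X k ω)‖^2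
          + ρ/(ρ+α*Real.sqrt K) * (2*Lf^2/(κ+α*Real.sqrt K)) := by
      filter_upwards [hae] with ω hω
      have hL1 : ∀ s : S, moreau (X (k+1) (Function.update ω ⟨k,hk⟩ s))
          ≤ moreau (X k ω) - ρ/2 * ‖X k ω - prox (X k ω)‖^2
            + ρ/(ρ+α*Real.sqrt K)
              * ((fmod (X k ω) (prox (X k ω)) s - fmod (X k ω) (X k ω) s
                    + (f (X k ω) - f (prox (X k ω))))
                + ((Lf^2 + Lfs s^2)/(κ+α*Real.sqrt K)
                    + (κ+α*Real.sqrt K)/2 * ‖X k ω - prox (X k ω)‖^2)) := by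
        intro s
        have hup : ∀ y, fmod (X k (Function.update ω ⟨k,hk⟩ s))
              (X (k+1) (Function.update ω ⟨k,hk⟩ s)) (Function.update ω ⟨k,hk⟩ s ⟨k,hk⟩)
            + w (X (k+1) (Function.update ω ⟨k,hk⟩ s))
            + (κ + (ρ+α*Real.sqrt K))/2
              * ‖X (k+1) (Function.update ω ⟨k,hk⟩ s) - X k (Function.update ω ⟨k,hk⟩ s)‖^2
            ≤ fmod (X k (Function.update ω ⟨k,hk⟩ s)) y (Function.update ω ⟨k,hk⟩ s ⟨k,hk⟩)
              + w y + (κ + (ρ+α*Real.sqrt K))/2 * ‖y - X k (Function.update ω ⟨k,hk⟩ s)‖^2 := by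
          intro y
          have h2 := hupdate k hk (Function.update ω ⟨k,hk⟩ s) y
          linarith [h2]
        have h := onestep f w ψ
          (fun y => fmod (X k (Function.update ω ⟨k,hk⟩ s)) y (Function.update ω ⟨k,hk⟩ s ⟨k,hk⟩))
          (Lfs (Function.update ω ⟨k,hk⟩ s ⟨k,hk⟩)) κ ρ Lf
          (ρ+α*Real.sqrt K) (κ+α*Real.sqrt K) prox moreau
          hGpos hgpos hρ0 (by ring) hψdef hw_weak
          (hmodel_conv _ _) (fun y z => hB1 _ y z _) hf_lip hprox hmoreau
          (X k (Function.update ω ⟨k,hk⟩ s)) (X (k+1) (Function.update ω ⟨k,hk⟩ s)) hup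
        rw [hXeq ω s, Function.update_self] at h
        exact h
      have hi1 : Integrable (fun s => fmod (X k ω) (prox (X k ω)) s) μ := hmodel_int _ _
      have hi2 : Integrable (fun s => fmod (X k ω) (X k ω) s) μ := hmodel_int _ _
      have hsub : Integrable
          (fun s => fmod (X k ω) (prox (X k ω)) s - fmod (X k ω) (X k ω) s) μ := hi1.sub hi2
      have hquot : Integrable (fun s => (Lf^2 + Lfs s^2)/(κ+α*Real.sqrt K)) μ :=
        ((integrable_const _).add hLfs_int).div_const _
      have hconstLfs : Integrable (fun s => Lf^2 + Lfs s^2) μ := (integrable_const _).add hLfs_int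
      have hW1 : Integrable (fun s => fmod (X k ω) (prox (X k ω)) s - fmod (X k ω) (X k ω) s
          + (f (X k ω) - f (prox (X k ω)))) μ := hsub.add (integrable_const _)
      have hW2 : Integrable (fun s => (Lf^2 + Lfs s^2)/(κ+α*Real.sqrt K)
          + (κ+α*Real.sqrt K)/2 * ‖X k ω - prox (X k ω)‖^2) μ :=
        hquot.add (integrable_const _)
      have hR : Integrable (fun s => moreau (X k ω) - ρ/2 * ‖X k ω - prox (X k ω)‖^2
          + ρ/(ρ+α*Real.sqrt K)
            * ((fmod (X k ω) (prox (X k ω)) s - fmod (X k ω) (X k ω) s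
                  + (f (X k ω) - f (prox (X k ω))))
              + ((Lf^2 + Lfs s^2)/(κ+α*Real.sqrt K)
                  + (κ+α*Real.sqrt K)/2 * ‖X k ω - prox (X k ω)‖^2))) μ :=
        (integrable_const _).add ((hW1.add hW2).const_mul _)
      have hW12 : Integrable (fun s => (fmod (X k ω) (prox (X k ω)) s - fmod (X k ω) (X k ω) s
          + (f (X k ω) - f (prox (X k ω))))
        + ((Lf^2 + Lfs s^2)/(κ+α*Real.sqrt K)
            + (κ+α*Real.sqrt K)/2 * ‖X k ω - prox (X k ω)‖^2)) μ := hW1.add hW2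
      have hW12m : Integrable (fun s => ρ/(ρ+α*Real.sqrt K)
          * ((fmod (X k ω) (prox (X k ω)) s - fmod (X k ω) (X k ω) s
              + (f (X k ω) - f (prox (X k ω))))
            + ((Lf^2 + Lfs s^2)/(κ+α*Real.sqrt K)
                + (κ+α*Real.sqrt K)/2 * ‖X k ω - prox (X k ω)‖^2))) μ := hW12.const_mul _
      have hle1 := integral_mono hω hR hL1
      have hIW1 : ∫ s, (fmod (X k ω) (prox (X k ω)) s - fmod (X k ω) (X k ω) s
          + (f (X k ω) - f (prox (X k ω)))) ∂μ ≤ τ/2 * ‖X k ω - prox (X k ω)‖^2 := by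
        rw [integral_add hsub (integrable_const _), integral_sub hi1 hi2,
          integral_const, hmodel_center]
        simp only [measure_univ, ENNReal.toReal_one, probReal_univ, smul_eq_mul, one_mul]
        have := hmodel_acc (X k ω) (prox (X k ω))
        linarith
      have hIW2 : ∫ s, ((Lf^2 + Lfs s^2)/(κ+α*Real.sqrt K)
          + (κ+α*Real.sqrt K)/2 * ‖X k ω - prox (X k ω)‖^2) ∂μ
          ≤ 2*Lf^2/(κ+α*Real.sqrt K)
            + (κ+α*Real.sqrt K)/2 * ‖X k ω - prox (X k ω)‖^2 := by
        rw [integral_add hquot (integrable_const _),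
          integral_div, integral_add (integrable_const _) hLfs_int, integral_const,
          integral_const]
        simp only [measure_univ, ENNReal.toReal_one, probReal_univ, smul_eq_mul, one_mul]
        have h1 : (Lf^2 + ∫ s, Lfs s^2 ∂μ)/(κ+α*Real.sqrt K)
            ≤ (2*Lf^2)/(κ+α*Real.sqrt K) :=
          (div_le_div_iff_of_pos_right hgpos).mpr (by linarith [hLfs_bound])
        linarith
      have hcoef : (0:ℝ) ≤ ρ/(ρ+α*Real.sqrt K) := div_nonneg hρ0.le hGpos.le
      have hle2 : ∫ s, (moreau (X k ω) - ρ/2 * ‖X k ω - prox (X k ω)‖^2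
          + ρ/(ρ+α*Real.sqrt K)
            * ((fmod (X k ω) (prox (X k ω)) s - fmod (X k ω) (X k ω) s
                  + (f (X k ω) - f (prox (X k ω))))
              + ((Lf^2 + Lfs s^2)/(κ+α*Real.sqrt K)
                  + (κ+α*Real.sqrt K)/2 * ‖X k ω - prox (X k ω)‖^2))) ∂μ
          ≤ moreau (X k ω) - ρ/2 * ‖X k ω - prox (X k ω)‖^2
            + ρ/(ρ+α*Real.sqrt K) * (τ/2 * ‖X k ω - prox (X k ω)‖^2
              + (2*Lf^2/(κ+α*Real.sqrt K)
                  + (κ+α*Real.sqrt K)/2 * ‖X k ω - prox (X k ω)‖^2)) := by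
        rw [integral_add (integrable_const _) hW12m,
          integral_const, integral_const_mul, integral_add hW1 hW2]
        simp only [measure_univ, ENNReal.toReal_one, probReal_univ, smul_eq_mul, one_mul]
        have := mul_le_mul_of_nonneg_left (add_le_add hIW1 hIW2) hcoef
        linarith
      have hid : moreau (X k ω) - ρ/2 * ‖X k ω - prox (X k ω)‖^2
          + ρ/(ρ+α*Real.sqrt K) * (τ/2 * ‖X k ω - prox (X k ω)‖^2
            + (2*Lf^2/(κ+α*Real.sqrt K)
                + (κ+α*Real.sqrt K)/2 * ‖X k ω - prox (X k ω)‖^2))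
          = moreau (X k ω)
            - ρ*(ρ-κ-τ)/(2*(ρ+α*Real.sqrt K)) * ‖X k ω - prox (X k ω)‖^2
            + ρ/(ρ+α*Real.sqrt K) * (2*Lf^2/(κ+α*Real.sqrt K)) := by
        field_simp
        ring
      linarith [hle1, hle2, hid]
    have hO1 : Integrable
        (fun ω => ∫ s, moreau (X (k+1) (Function.update ω ⟨k,hk⟩ s)) ∂μ) ν :=
      hFP.integral_prod_left
    have hO2 : Integrable (fun ω => moreau (X k ω)
        - ρ*(ρ-κ-τ)/(2*(ρ+α*Real.sqrt K)) * ‖X k ω - prox (X k ω)‖^2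
        + ρ/(ρ+α*Real.sqrt K) * (2*Lf^2/(κ+α*Real.sqrt K))) ν :=
      ((hmint k).sub ((hint k).const_mul _)).add (integrable_const _)
    have hout := integral_mono_ae hO1 hO2 hinner
    rw [← hFub] at hout
    have hIRHS : ∫ ω, (moreau (X k ω)
        - ρ*(ρ-κ-τ)/(2*(ρ+α*Real.sqrt K)) * ‖X k ω - prox (X k ω)‖^2
        + ρ/(ρ+α*Real.sqrt K) * (2*Lf^2/(κ+α*Real.sqrt K))) ∂ν
        = ∫ ω, moreau (X k ω) ∂ν
          - ρ*(ρ-κ-τ)/(2*(ρ+α*Real.sqrt K)) * ∫ ω, ‖X k ω - prox (X k ω)‖^2 ∂ν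
          + ρ/(ρ+α*Real.sqrt K) * (2*Lf^2/(κ+α*Real.sqrt K)) := by
      have hcm : Integrable (fun ω => ρ*(ρ-κ-τ)/(2*(ρ+α*Real.sqrt K))
          * ‖X k ω - prox (X k ω)‖^2) ν := (hint k).const_mul _
      have hsub2 : Integrable (fun ω => moreau (X k ω)
          - ρ*(ρ-κ-τ)/(2*(ρ+α*Real.sqrt K)) * ‖X k ω - prox (X k ω)‖^2) ν :=
        (hmint k).sub hcm
      rw [integral_add hsub2 (integrable_const _),
        integral_sub (hmint k) hcm, integral_const_mul, integral_const]
      simp [measure_univ]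
    rw [hIRHS] at hout
    exact hout
  -- telescoping
  have tele : ∀ m : ℕ, m ≤ K →
      ∫ ω, moreau (X m ω) ∂ν
        + ρ*(ρ-κ-τ)/(2*(ρ+α*Real.sqrt K))
          * ∑ j ∈ Finset.range m, ∫ ω, ‖X j ω - prox (X j ω)‖^2 ∂ν
      ≤ ∫ ω, moreau (X 0 ω) ∂ν
        + m * (ρ/(ρ+α*Real.sqrt K) * (2*Lf^2/(κ+α*Real.sqrt K))) := by
    intro m
    induction m with
    | zero => intro _; simp
    | succ p ih =>
      intro hpK
      have hp : p < K := Nat.lt_of_succ_le hpK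
      have h1 := ih (le_of_lt hp)
      have h2 := key p hp
      rw [Finset.sum_range_succ]
      push_cast
      push_cast at h1
      nlinarith [h1, h2]
  have hfinal := tele K le_rfl
  have hM0 : ∫ ω, moreau (X 0 ω) ∂ν = moreau x1 := by
    have hfun : (fun ω : Fin K → S => moreau (X 0 ω)) = fun _ => moreau x1 :=
      funext fun ω => by rw [hX0]
    rw [hfun, integral_const]
    simp [measure_univ]
  have hMle : moreau x1 ≤ ψ x1 := by
    have h := hprox x1 x1
    rw [hmoreau x1]
    simpa using h
  have hMK : (⨅ x, ψ x) ≤ ∫ ω, moreau (X K ω) ∂ν := by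
    have hpt : ∀ ω, (⨅ x, ψ x) ≤ moreau (X K ω) := fun ω => by
      rw [hmoreau]
      have h1 := hinf_le (prox (X K ω))
      nlinarith [sq_nonneg ‖prox (X K ω) - X K ω‖, hρ0.le]
    calc (⨅ x, ψ x) = ∫ _ω, (⨅ x, ψ x) ∂ν := by rw [integral_const]; simp [measure_univ]
      _ ≤ _ := integral_mono (integrable_const _) (hmint K) hpt
  have hc1 : 0 < ρ*(ρ-κ-τ)/(2*(ρ+α*Real.sqrt K)) :=
    div_pos (by nlinarith) (by linarith)
  have hsum : ρ*(ρ-κ-τ)/(2*(ρ+α*Real.sqrt K))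
      * ∑ j ∈ Finset.range K, ∫ ω, ‖X j ω - prox (X j ω)‖^2 ∂ν
      ≤ (ψ x1 - ⨅ x, ψ x)
        + K * (ρ/(ρ+α*Real.sqrt K) * (2*Lf^2/(κ+α*Real.sqrt K))) := by
    rw [hM0] at hfinal
    linarith [hfinal, hMle, hMK]
  have hD : 0 ≤ ψ x1 - ⨅ x, ψ x := by linarith [hinf_le x1]
  -- final arithmetic
  have hsum2 : ∑ j ∈ Finset.range K, (ρ^2 * ∫ ω, ‖X j ω - prox (X j ω)‖^2 ∂ν)
      ≤ K * (2 * ρ / (ρ - τ - κ)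
          * (ρ * (ψ x1 - ⨅ x, ψ x) / K
            + (1 / Real.sqrt K) * (α * (ψ x1 - ⨅ x, ψ x) + 2 * ρ * Lf ^ 2 / α))) := by
    rw [← Finset.mul_sum]
    set Sg := ∑ j ∈ Finset.range K, ∫ ω, ‖X j ω - prox (X j ω)‖^2 ∂ν with hSg
    set D := ψ x1 - ⨅ x, ψ x with hDdef
    have hstep1 : ρ^2 * Sg
        ≤ 2*ρ/(ρ-τ-κ) * ((ρ+α*Real.sqrt K)*D
            + (K:ℝ)*(2*ρ*Lf^2/(κ+α*Real.sqrt K))) := by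
      have hSle : Sg ≤ ((D + K * (ρ/(ρ+α*Real.sqrt K) * (2*Lf^2/(κ+α*Real.sqrt K))))
          / (ρ*(ρ-κ-τ)/(2*(ρ+α*Real.sqrt K)))) := by
        rw [le_div_iff₀ hc1]
        calc Sg * (ρ*(ρ-κ-τ)/(2*(ρ+α*Real.sqrt K)))
            = ρ*(ρ-κ-τ)/(2*(ρ+α*Real.sqrt K)) * Sg := by ring
          _ ≤ _ := hsum
      have h2 := mul_le_mul_of_nonneg_left hSle (sq_nonneg ρ)
      have hident : ρ^2 * ((D + K * (ρ/(ρ+α*Real.sqrt K) * (2*Lf^2/(κ+α*Real.sqrt K))))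
          / (ρ*(ρ-κ-τ)/(2*(ρ+α*Real.sqrt K))))
          = 2*ρ/(ρ-τ-κ) * ((ρ+α*Real.sqrt K)*D
              + (K:ℝ)*(2*ρ*Lf^2/(κ+α*Real.sqrt K))) := by
        have hne1 : ρ - τ - κ ≠ 0 := hrtκ.ne'
        have hne2 : ρ - κ - τ ≠ 0 := by intro h; apply hne1; linarith
        field_simp [hρ0.ne', hGpos.ne', hgpos.ne', hne1, hne2]
        ring
      rw [hident] at h2
      exact h2
    have hstep2 : 2*ρ/(ρ-τ-κ) * ((ρ+α*Real.sqrt K)*D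
            + (K:ℝ)*(2*ρ*Lf^2/(κ+α*Real.sqrt K)))
        ≤ K * (2 * ρ / (ρ - τ - κ)
            * (ρ * D / K + (1 / Real.sqrt K) * (α * D + 2 * ρ * Lf ^ 2 / α))) := by
      have hinnerle : (ρ+α*Real.sqrt K)*D + (K:ℝ)*(2*ρ*Lf^2/(κ+α*Real.sqrt K))
          ≤ ρ*D + Real.sqrt K * (α*D + 2*ρ*Lf^2/α) := by
        have hquot : (K:ℝ)/(κ+α*Real.sqrt K) ≤ Real.sqrt K/α := by
          rw [div_le_div_iff₀ hgpos hα]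
          nlinarith [mul_nonneg hsK.le hκ, hKeq]
        have hq2 := mul_le_mul_of_nonneg_left hquot (by positivity : (0:ℝ) ≤ 2*ρ*Lf^2)
        have he1 : (K:ℝ)*(2*ρ*Lf^2/(κ+α*Real.sqrt K))
            = 2*ρ*Lf^2 * ((K:ℝ)/(κ+α*Real.sqrt K)) := by ring
        have he2 : Real.sqrt K * (2*ρ*Lf^2/α) = 2*ρ*Lf^2 * (Real.sqrt K/α) := by ring
        linarith [hq2, he1, he2]
      have hcoef2 : (0:ℝ) ≤ 2*ρ/(ρ-τ-κ) := div_nonneg (by linarith) hrtκ.le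
      have h3 := mul_le_mul_of_nonneg_left hinnerle hcoef2
      have hident2 : (K:ℝ) * (2 * ρ / (ρ - τ - κ)
            * (ρ * D / K + (1 / Real.sqrt K) * (α * D + 2 * ρ * Lf ^ 2 / α)))
          = 2*ρ/(ρ-τ-κ) * (ρ*D + Real.sqrt K * (α*D + 2*ρ*Lf^2/α)) := by
        have hgen : ∀ sk : ℝ, 0 < sk → (K:ℝ) = sk*sk →
            (K:ℝ) * (2 * ρ / (ρ - τ - κ)
              * (ρ * D / K + (1 / sk) * (α * D + 2 * ρ * Lf ^ 2 / α)))
            = 2*ρ/(ρ-τ-κ) * (ρ*D + sk * (α*D + 2*ρ*Lf^2/α)) := by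
          intro sk hsk hKK
          have hne1 : ρ - τ - κ ≠ 0 := hrtκ.ne'
          rw [hKK]
          field_simp [hsk.ne', hα.ne', hne1]
        exact hgen _ hsK hKeq
      rw [hident2]
      exact h3
    exact le_trans hstep1 hstep2
  have hKT : ∑ j ∈ Finset.range K, (ρ^2 * ∫ ω, ‖X j ω - prox (X j ω)‖^2 ∂ν)
      ≤ ∑ _j ∈ Finset.range K, (2 * ρ / (ρ - τ - κ)
          * (ρ * (ψ x1 - ⨅ x, ψ x) / K
            + (1 / Real.sqrt K) * (α * (ψ x1 - ⨅ x, ψ x) + 2 * ρ * Lf ^ 2 / α))) := by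
    rw [Finset.sum_const, Finset.card_range, nsmul_eq_mul]
    exact hsum2
  obtain ⟨j, hjmem, hj⟩ := Finset.exists_le_of_sum_le
    ⟨0, Finset.mem_range.2 (by omega)⟩ hKT
  refine ⟨j, Finset.mem_range.1 hjmem, ?_⟩
  rw [integral_const_mul]
  exact hj
end

section
/- One-step descent under generalized Lipschitz continuity: Let ρ > κ + τ and γ > ρ with γ independent of the sample ξ. Let x ∈ ℝⁿ be fixed and let x⁺(ξ) = argmin_y { f_x(y,ξ) + ω(y) + (γ/2)‖y − x‖² } for a sample ξ ∼ Ξ. Then E_ξ[ψ_{1/ρ}(x⁺(ξ))] ≤ ψ_{1/ρ}(x) − (ρ(ρ − τ − κ)/(2(γ − κ)))‖x̂ − x‖² + ρ(𝒢(‖x‖)L_f + L_ω)²/(2γ(γ − κ)), where x̂ = prox_{ψ/ρ}(x). -/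
open MeasureTheory

lemma comb_sq {n : ℕ} (a b : EuclideanSpace ℝ (Fin n)) (t : ℝ) :
    ‖(1-t)•a + t•b‖^2 = (1-t)*‖a‖^2 + t*‖b‖^2 - t*(1-t)*‖b-a‖^2 := by
  have h : (1-t)•a + t•b = a + t•(b-a) := by module
  have h2 : ‖a + t•(b-a)‖^2 = ‖a‖^2 + 2*inner ℝ a (t•(b-a)) + ‖t•(b-a)‖^2 :=
    norm_add_sq_real a _
  have h3 : ‖a + (b-a)‖^2 = ‖a‖^2 + 2*inner ℝ a (b-a) + ‖b-a‖^2 := norm_add_sq_real a _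
  have h4 : a + (b - a) = b := by abel
  rw [h4] at h3
  rw [h, h2, real_inner_smul_right, norm_smul, Real.norm_eq_abs, mul_pow, sq_abs, h3]
  ring

-- strong convexity of the regularized model: minimizer version
lemma strong_min_s2 {n : ℕ} {S : Type*} (w : EuclideanSpace ℝ (Fin n) → ℝ)
    (fmod : EuclideanSpace ℝ (Fin n) → EuclideanSpace ℝ (Fin n) → S → ℝ)
    (κ γ : ℝ) (hκγ : κ < γ)
    (hw_weak : ConvexOn ℝ Set.univ (fun x => w x + κ / 2 * ‖x‖ ^ 2))
    (hmodel_conv : ∀ x s, ConvexOn ℝ Set.univ (fun y => fmod x y s))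
    (x : EuclideanSpace ℝ (Fin n)) (xplus : S → EuclideanSpace ℝ (Fin n))
    (hupdate : ∀ s y,
      fmod x (xplus s) s + w (xplus s) + γ / 2 * ‖xplus s - x‖ ^ 2
        ≤ fmod x y s + w y + γ / 2 * ‖y - x‖ ^ 2)
    (s : S) (y : EuclideanSpace ℝ (Fin n)) :
    fmod x (xplus s) s + w (xplus s) + γ / 2 * ‖xplus s - x‖ ^ 2
      + (γ - κ)/2 * ‖y - xplus s‖^2
      ≤ fmod x y s + w y + γ / 2 * ‖y - x‖ ^ 2 := by
  set u := xplus s with hu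
  have claim : ∀ t : ℝ, 0 < t → t ≤ 1 →
      fmod x u s + w u + γ/2*‖u-x‖^2
        ≤ fmod x y s + w y + γ/2*‖y-x‖^2 - (γ-κ)/2*(1-t)*‖y-u‖^2 := by
    intro t ht0 ht1
    have h1t : (0:ℝ) ≤ 1 - t := by linarith
    set z := (1-t)•u + t•y with hz
    have hc1 : fmod x z s ≤ (1-t)*fmod x u s + t*fmod x y s := by
      have := (hmodel_conv x s).2 (Set.mem_univ u) (Set.mem_univ y) h1t ht0.le (by ring)
      simpa [smul_eq_mul] using this
    have hc2 : w z + κ/2*‖z‖^2 ≤ (1-t)*(w u + κ/2*‖u‖^2) + t*(w y + κ/2*‖y‖^2) := by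
      have := hw_weak.2 (Set.mem_univ u) (Set.mem_univ y) h1t ht0.le (by ring)
      simpa [smul_eq_mul] using this
    have hzz : ‖z‖^2 = (1-t)*‖u‖^2 + t*‖y‖^2 - t*(1-t)*‖y-u‖^2 := comb_sq u y t
    have hzx : ‖z - x‖^2 = (1-t)*‖u-x‖^2 + t*‖y-x‖^2 - t*(1-t)*‖y-u‖^2 := by
      have h := comb_sq (u-x) (y-x) t
      have he : (1-t)•(u-x) + t•(y-x) = z - x := by rw [hz]; module
      have he2 : (y-x)-(u-x) = y - u := by abel
      rw [he, he2] at h; exact h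
    have hmin := hupdate s z
    rw [← hu] at hmin
    rw [hzz] at hc2
    rw [hzx] at hmin
    have hmul : t * (fmod x u s + w u + γ/2*‖u-x‖^2)
        ≤ t * (fmod x y s + w y + γ/2*‖y-x‖^2 - (γ-κ)/2*(1-t)*‖y-u‖^2) := by
      nlinarith [hmin, hc1, hc2]
    exact le_of_mul_le_mul_left hmul ht0
  have hq : 0 ≤ (γ-κ)/2*‖y-u‖^2 := mul_nonneg (by linarith) (by positivity)
  have : ∀ ε : ℝ, 0 < ε →
      fmod x u s + w u + γ/2*‖u-x‖^2 + (γ-κ)/2*‖y-u‖^2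
        ≤ fmod x y s + w y + γ/2*‖y-x‖^2 + ε := by
    intro ε hε
    set q := (γ-κ)/2*‖y-u‖^2 with hqdef
    set t := min 1 (ε/(q+1)) with htdef
    have ht0 : 0 < t := lt_min one_pos (by positivity)
    have ht1 : t ≤ 1 := min_le_left _ _
    have htq : t * q ≤ ε := by
      have h1 : t ≤ ε/(q+1) := min_le_right _ _
      have h2 : t * q ≤ ε/(q+1) * q := mul_le_mul_of_nonneg_right h1 hq
      have h3 : ε/(q+1)*q ≤ ε := by
        rw [div_mul_eq_mul_div, div_le_iff₀ (by linarith)]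
        nlinarith
      linarith
    have hc := claim t ht0 ht1
    have : (γ-κ)/2*(1-t)*‖y-u‖^2 = q - t*q := by rw [hqdef]; ring
    linarith [hc, this]
  linarith [le_of_forall_pos_le_add this]



set_option maxHeartbeats 1000000 in
/-- **Lemma 2** (one-step descent under generalized Lipschitz continuity).
Here the models satisfy assumption C1: `fmod x y s - fmod x z s ≤ L_f(s) 𝒢(‖x‖) ‖y - z‖`
for a continuous non-decreasing nonnegative growth function `𝒢`. With `ρ > κ + τ`, `γ > ρ`
(deterministic, independent of the sample), and `x⁺(ξ)` the minimizer of the regularized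
model at `x`, one has
`E_ξ[ψ_{1/ρ}(x⁺(ξ))] ≤ ψ_{1/ρ}(x) - ρ(ρ-τ-κ)/(2(γ-κ)) ‖x̂-x‖²
  + ρ(𝒢(‖x‖)L_f + L_ω)²/(2γ(γ-κ))`. -/
theorem one_step_descent_generalized_lipschitz
    {n : ℕ} {S : Type*} [MeasurableSpace S] (μ : Measure S) [IsProbabilityMeasure μ]
    (f w ψ : EuclideanSpace ℝ (Fin n) → ℝ)
    (fmod : EuclideanSpace ℝ (Fin n) → EuclideanSpace ℝ (Fin n) → S → ℝ)
    (Lfs : S → ℝ) (G : ℝ → ℝ) (κ τ ρ γ Lf Lw : ℝ)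
    (prox : EuclideanSpace ℝ (Fin n) → EuclideanSpace ℝ (Fin n))
    (moreau : EuclideanSpace ℝ (Fin n) → ℝ)
    -- basic parameter assumptions
    (hκ : 0 ≤ κ) (hτ : 0 ≤ τ) (hρ : κ + τ < ρ) (hγ : ρ < γ)
    (hLf : 0 ≤ Lf) (hLw : 0 ≤ Lw)
    -- composite objective
    (hψdef : ∀ x, ψ x = f x + w x)
    -- A2: `w` is κ-weakly convex and L_ω-Lipschitz
    (hw_weak : ConvexOn ℝ Set.univ (fun x => w x + κ / 2 * ‖x‖ ^ 2))
    (hw_lip : ∀ x y, |w x - w y| ≤ Lw * ‖x - y‖)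
    -- A3: properties of the stochastic model
    (hmodel_conv : ∀ x s, ConvexOn ℝ Set.univ (fun y => fmod x y s))
    (hmodel_int : ∀ x y, Integrable (fun s => fmod x y s) μ)
    (hmodel_center : ∀ x, ∫ s, fmod x x s ∂μ = f x)
    (hmodel_acc : ∀ x y, (∫ s, fmod x y s ∂μ) - f y ≤ τ / 2 * ‖x - y‖ ^ 2)
    -- C1: generalized Lipschitz continuity with growth function 𝒢
    (hG_nonneg : ∀ t, 0 ≤ G t) (hG_mono : Monotone G) (hG_cont : Continuous G)
    (hC1 : ∀ x y z s, fmod x y s - fmod x z s ≤ Lfs s * G ‖x‖ * ‖y - z‖)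
    (hLfs_int : Integrable (fun s => Lfs s ^ 2) μ)
    (hLfs_bound : ∫ s, Lfs s ^ 2 ∂μ ≤ Lf ^ 2)
    -- Moreau envelope `ψ_{1/ρ}` and proximal mapping `prox = prox_{ψ/ρ}`
    (hprox : ∀ x z, ψ (prox x) + ρ / 2 * ‖prox x - x‖ ^ 2 ≤ ψ z + ρ / 2 * ‖z - x‖ ^ 2)
    (hmoreau : ∀ x, moreau x = ψ (prox x) + ρ / 2 * ‖prox x - x‖ ^ 2)
    -- the current point and the stochastic one-step update
    (x : EuclideanSpace ℝ (Fin n)) (xplus : S → EuclideanSpace ℝ (Fin n))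
    (hupdate : ∀ s y,
      fmod x (xplus s) s + w (xplus s) + γ / 2 * ‖xplus s - x‖ ^ 2
        ≤ fmod x y s + w y + γ / 2 * ‖y - x‖ ^ 2)
    (hint : Integrable (fun s => moreau (xplus s)) μ) :
    ∫ s, moreau (xplus s) ∂μ
      ≤ moreau x - ρ * (ρ - τ - κ) / (2 * (γ - κ)) * ‖prox x - x‖ ^ 2
        + ρ * (G ‖x‖ * Lf + Lw) ^ 2 / (2 * γ * (γ - κ)) := by
  have hκγ : κ < γ := by linarith
  have hγκpos : (0:ℝ) < γ - κ := by linarith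
  have hγpos : (0:ℝ) < γ := by linarith
  have hρpos : (0:ℝ) < ρ := by linarith
  set Gx := G ‖x‖ with hGxdef
  have hGx : 0 ≤ Gx := hG_nonneg _
  set xh := prox x with hxh
  -- pointwise bound
  have hP : ∀ s, moreau (xplus s) ≤
      ψ xh + ρ/(γ-κ)*(w xh - w x + γ/2*‖xh - x‖^2)
      + ρ/(γ-κ)*(fmod x xh s - fmod x x s)
      + ρ/(2*γ*(γ-κ)) * (|Lfs s| *Gx + Lw)^2 := by
    intro s
    set u := xplus s with hu
    have h1 : moreau u ≤ ψ xh + ρ/2*‖xh - u‖^2 := by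
      rw [hmoreau]; exact hprox u xh
    have h2 := strong_min_s2 w fmod κ γ hκγ hw_weak hmodel_conv x xplus hupdate s xh
    rw [← hu] at h2
    have h3 : fmod x x s - fmod x u s ≤ |Lfs s| * Gx * ‖u - x‖ := by
      have := hC1 x x u s
      rw [norm_sub_rev] at this
      calc fmod x x s - fmod x u s ≤ Lfs s * Gx * ‖u - x‖ := this
        _ ≤ |Lfs s| * Gx * ‖u - x‖ :=
          mul_le_mul_of_nonneg_right
            (mul_le_mul_of_nonneg_right (le_abs_self _) hGx) (norm_nonneg _)
    have h4 : w x - w u ≤ Lw * ‖u - x‖ := by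
      have := hw_lip x u
      rw [norm_sub_rev] at this
      exact le_trans (le_abs_self _) this
    have h5 : (|Lfs s| *Gx + Lw) * ‖u - x‖ ≤ γ/2*‖u - x‖^2 + (|Lfs s| *Gx + Lw)^2/(2*γ) := by
      set B := |Lfs s| *Gx + Lw
      set r := ‖u - x‖
      have key2 : 0 ≤ 2*γ*(γ/2*r^2 + B^2/(2*γ) - B*r) := by
        have : 2*γ*(γ/2*r^2 + B^2/(2*γ) - B*r) = (γ*r - B)^2 := by
          field_simp; ring
        rw [this]; exact sq_nonneg _
      nlinarith [key2]
    have h6 : (γ-κ)/2*‖xh - u‖^2 ≤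
        fmod x xh s - fmod x x s + w xh - w x + γ/2*‖xh - x‖^2
        + (|Lfs s| *Gx + Lw)^2/(2*γ) := by nlinarith [h2, h3, h4, h5]
    have h7 := mul_le_mul_of_nonneg_left h6 (show (0:ℝ) ≤ ρ/(γ-κ) by positivity)
    have h8 : ρ/(γ-κ)*((γ-κ)/2*‖xh - u‖^2) = ρ/2*‖xh - u‖^2 := by
      field_simp
    have h9 : ρ/(γ-κ)*(fmod x xh s - fmod x x s + w xh - w x + γ/2*‖xh - x‖^2
        + (|Lfs s| *Gx + Lw)^2/(2*γ))
        = ρ/(γ-κ)*(w xh - w x + γ/2*‖xh - x‖^2)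
          + ρ/(γ-κ)*(fmod x xh s - fmod x x s)
          + ρ/(2*γ*(γ-κ)) * (|Lfs s| *Gx + Lw)^2 := by
      field_simp; ring
    linarith [h1, h7, h8.symm.le, h9.symm.le, h8.le, h9.le]
  -- measurability and integrability of |Lfs|
  have habs_meas : AEStronglyMeasurable (fun s => |Lfs s|) μ := by
    have h := Real.continuous_sqrt.comp_aestronglyMeasurable hLfs_int.aestronglyMeasurable
    refine h.congr (Filter.Eventually.of_forall fun s => ?_)
    simp [Real.sqrt_sq_eq_abs]
  have habs_int : Integrable (fun s => |Lfs s|) μ := by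
    refine (hLfs_int.add (integrable_const 1)).mono habs_meas
      (Filter.Eventually.of_forall fun s => ?_)
    simp only [Pi.add_apply, Real.norm_eq_abs, abs_abs]
    have h1 : |Lfs s| ≤ Lfs s ^ 2 + 1 := by nlinarith [abs_nonneg (Lfs s), sq_abs (Lfs s)]
    have h2 : (0:ℝ) ≤ Lfs s ^ 2 + 1 := by positivity
    rw [abs_of_nonneg h2]; exact h1
  have hB2_eq : (fun s => (|Lfs s| * Gx + Lw)^2)
      = fun s => Gx^2 * Lfs s ^ 2 + (2*Gx*Lw) * |Lfs s| + Lw^2 := by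
    funext s; linear_combination Gx^2 * sq_abs (Lfs s)
  have hB2_int : Integrable (fun s => (|Lfs s| * Gx + Lw)^2) μ := by
    rw [hB2_eq]
    exact ((hLfs_int.const_mul _).add (habs_int.const_mul _)).add (integrable_const _)
  -- the mean of |Lfs| and its bound
  set m := ∫ s, |Lfs s| ∂μ with hmdef
  have hm0 : 0 ≤ m := integral_nonneg fun s => abs_nonneg _
  have hvar : m^2 ≤ ∫ s, Lfs s ^ 2 ∂μ := by
    have h0 : (0:ℝ) ≤ ∫ s, (|Lfs s| - m)^2 ∂μ := integral_nonneg fun s => sq_nonneg _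
    have heq : (fun s => (|Lfs s| - m)^2) = fun s => Lfs s ^ 2 - (2*m) * |Lfs s| + m^2 := by
      funext s; linear_combination sq_abs (Lfs s)
    have i1 : Integrable (fun s => Lfs s ^ 2 - (2*m) * |Lfs s|) μ :=
      hLfs_int.sub (habs_int.const_mul _)
    have i2 : Integrable (fun s => (2*m) * |Lfs s|) μ := habs_int.const_mul _
    rw [heq, integral_add i1 (integrable_const _), integral_sub hLfs_int i2,
      integral_const_mul, integral_const, probReal_univ] at h0
    simp at h0
    linarith
  have hmLf : m ≤ Lf := by nlinarith
  have hIB : ∫ s, (|Lfs s| * Gx + Lw)^2 ∂μ ≤ (Gx*Lf + Lw)^2 := by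
    have i1 : Integrable (fun s => Gx^2 * Lfs s ^ 2) μ := hLfs_int.const_mul _
    have i2 : Integrable (fun s => (2*Gx*Lw) * |Lfs s|) μ := habs_int.const_mul _
    have i3 : Integrable (fun s => Gx^2 * Lfs s ^ 2 + (2*Gx*Lw) * |Lfs s|) μ := i1.add i2
    rw [hB2_eq, integral_add i3 (integrable_const _), integral_add i1 i2,
      integral_const_mul, integral_const_mul, integral_const, probReal_univ]
    simp only [ENNReal.toReal_one, smul_eq_mul, one_mul]
    nlinarith [mul_nonneg hGx hLw, sq_nonneg Gx]
  -- integrate the pointwise bound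
  have hg_int : Integrable (fun s =>
      ψ xh + ρ/(γ-κ)*(w xh - w x + γ/2*‖xh - x‖^2)
      + ρ/(γ-κ)*(fmod x xh s - fmod x x s)
      + ρ/(2*γ*(γ-κ)) * (|Lfs s| * Gx + Lw)^2) μ := by
    exact ((integrable_const _).add
      (((hmodel_int x xh).sub (hmodel_int x x)).const_mul _)).add (hB2_int.const_mul _)
  have hmono := integral_mono hint hg_int hP
  have hIg : ∫ s, (ψ xh + ρ/(γ-κ)*(w xh - w x + γ/2*‖xh - x‖^2)
      + ρ/(γ-κ)*(fmod x xh s - fmod x x s)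
      + ρ/(2*γ*(γ-κ)) * (|Lfs s| * Gx + Lw)^2) ∂μ
      = (ψ xh + ρ/(γ-κ)*(w xh - w x + γ/2*‖xh - x‖^2))
        + ρ/(γ-κ)*((∫ s, fmod x xh s ∂μ) - (∫ s, fmod x x s ∂μ))
        + ρ/(2*γ*(γ-κ)) * ∫ s, (|Lfs s| * Gx + Lw)^2 ∂μ := by
    have i0 : Integrable (fun s => fmod x xh s - fmod x x s) μ :=
      (hmodel_int x xh).sub (hmodel_int x x)
    have i1 : Integrable (fun s => ρ/(γ-κ)*(fmod x xh s - fmod x x s)) μ := i0.const_mul _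
    have i2 : Integrable (fun s => ρ/(2*γ*(γ-κ)) * (|Lfs s| * Gx + Lw)^2) μ :=
      hB2_int.const_mul _
    have i3 : Integrable (fun s => ψ xh + ρ/(γ-κ)*(w xh - w x + γ/2*‖xh - x‖^2)
        + ρ/(γ-κ)*(fmod x xh s - fmod x x s)) μ := (integrable_const _).add i1
    rw [integral_add i3 i2, integral_add (integrable_const _) i1,
      integral_const, probReal_univ, integral_const_mul, integral_const_mul,
      integral_sub (hmodel_int x xh) (hmodel_int x x)]
    simp
  rw [hIg] at hmono
  -- bounds on the integrals
  have hacc : (∫ s, fmod x xh s ∂μ) ≤ f xh + τ/2*‖xh - x‖^2 := by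
    have := hmodel_acc x xh
    rw [norm_sub_rev] at this
    linarith
  have hcen : (∫ s, fmod x x s ∂μ) = f x := hmodel_center x
  have hdec : f xh + w xh + ρ/2*‖xh - x‖^2 ≤ f x + w x := by
    have h := hprox x x
    rw [← hxh, hψdef, hψdef] at h
    simp only [sub_self, norm_zero] at h
    nlinarith [h]
  -- final algebra
  have hc2 : (0:ℝ) ≤ ρ/(γ-κ) := by positivity
  have hc3 : (0:ℝ) ≤ ρ/(2*γ*(γ-κ)) := by positivity
  have hstep1 := mul_le_mul_of_nonneg_left
    (show (∫ s, fmod x xh s ∂μ) - (∫ s, fmod x x s ∂μ)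
        ≤ f xh + τ/2*‖xh - x‖^2 - f x by rw [hcen]; linarith) hc2
  have hstep2 := mul_le_mul_of_nonneg_left hIB hc3
  have hmx : moreau x = ψ xh + ρ/2*‖xh - x‖^2 := by rw [hmoreau, hxh]
  have hψx : ψ x = f x + w x := hψdef x
  have hψxh : ψ xh = f xh + w xh := hψdef xh
  -- combine everything
  have e1 : ρ/(γ-κ)*(w xh - w x + γ/2*‖xh - x‖^2) + ρ/(γ-κ)*(f xh + τ/2*‖xh - x‖^2 - f x)
      ≤ ρ/(γ-κ)*((γ + τ - ρ)/2*‖xh - x‖^2) := by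
    have h : (w xh - w x + γ/2*‖xh - x‖^2) + (f xh + τ/2*‖xh - x‖^2 - f x)
        ≤ (γ + τ - ρ)/2*‖xh - x‖^2 := by linarith
    have := mul_le_mul_of_nonneg_left h hc2
    linarith [this]
  have e2 : ρ/(γ-κ)*((γ + τ - ρ)/2*‖xh - x‖^2)
      = ρ/2*‖xh - x‖^2 - ρ*(ρ - τ - κ)/(2*(γ-κ))*‖xh - x‖^2 := by
    field_simp; ring
  have e3 : ρ/(2*γ*(γ-κ)) * (Gx*Lf + Lw)^2 = ρ*(Gx*Lf + Lw)^2/(2*γ*(γ-κ)) := by ring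
  rw [hmx]
  linarith [hmono, hstep1, hstep2, e1, e2.le, e2.symm.le, e3.le, e3.symm.le]
end

section
/- Bounded expected displacement under the adaptive stepsize: Let ρ > κ + τ and run x^{k+1} = argmin_x { f_{x^k}(x,ξ^k) + ω(x) + (γ_k/2)‖x − x^k‖² } with i.i.d. samples ξ^k ∼ Ξ and γ_k = ρ + κ + τ + α(𝒢(‖x^k‖) + 1)√K for some α > 0. Then for every 2 ≤ k ≤ K, the conditional expectation of the step length satisfies E_k[‖x^{k+1} − x^k‖] ≤ 2(L_f + L_ω)/(α√K), where E_k denotes expectation over ξ^k conditioned on ξ¹,…,ξ^{k−1}. -/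
open MeasureTheory
set_option maxHeartbeats 1000000 in

/-- **Lemma 2.22** (bounded expected displacement under the adaptive stepsize).
The iterates are represented in prefix form: `X k ω` is the iterate `x^{k+1}` produced from
the first `k` samples `ω : Fin k → S` (so `x¹ = X 0`), and `X (k+1) (Fin.snoc ω s)`
minimizes the regularized stochastic model built at `X k ω` with sample `s`, with
adaptive stepsize `γ_k = ρ + κ + τ + α(𝒢(‖x^k‖)+1)√K`.  Then for every `2 ≤ k ≤ K`
(i.e. every prefix index `1 ≤ j ≤ K-1`) and every realization of the past, the
conditional expectation of the step length satisfies
`E_k[‖x^{k+1} - x^k‖] ≤ 2(L_f + L_ω)/(α√K)`. -/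
theorem bounded_expected_displacement
    {n : ℕ} {S : Type*} [MeasurableSpace S] (μ : Measure S) [IsProbabilityMeasure μ]
    (f w ψ : EuclideanSpace ℝ (Fin n) → ℝ)
    (fmod : EuclideanSpace ℝ (Fin n) → EuclideanSpace ℝ (Fin n) → S → ℝ)
    (Lfs : S → ℝ) (G : ℝ → ℝ) (κ τ ρ Lf Lw α : ℝ)
    -- basic parameter assumptions
    (hκ : 0 ≤ κ) (hτ : 0 ≤ τ) (hρ : κ + τ < ρ) (hα : 0 < α)
    (hLf : 0 ≤ Lf) (hLw : 0 ≤ Lw)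
    -- composite objective
    (hψdef : ∀ x, ψ x = f x + w x)
    -- A2: `w` is κ-weakly convex and L_ω-Lipschitz
    (hw_weak : ConvexOn ℝ Set.univ (fun x => w x + κ / 2 * ‖x‖ ^ 2))
    (hw_lip : ∀ x y, |w x - w y| ≤ Lw * ‖x - y‖)
    -- A3: properties of the stochastic model
    (hmodel_conv : ∀ x s, ConvexOn ℝ Set.univ (fun y => fmod x y s))
    (hmodel_int : ∀ x y, Integrable (fun s => fmod x y s) μ)
    (hmodel_center : ∀ x, ∫ s, fmod x x s ∂μ = f x)
    (hmodel_acc : ∀ x y, (∫ s, fmod x y s ∂μ) - f y ≤ τ / 2 * ‖x - y‖ ^ 2)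
    -- C1: generalized Lipschitz continuity with growth function 𝒢
    (hG_nonneg : ∀ t, 0 ≤ G t) (hG_mono : Monotone G) (hG_cont : Continuous G)
    (hC1 : ∀ x y z s, fmod x y s - fmod x z s ≤ Lfs s * G ‖x‖ * ‖y - z‖)
    (hLfs_nonneg : ∀ s, 0 ≤ Lfs s)
    (hLfs_int : Integrable (fun s => Lfs s ^ 2) μ)
    (hLfs_bound : ∫ s, Lfs s ^ 2 ∂μ ≤ Lf ^ 2)
    -- the algorithm in prefix form: `X k` is a function of the first `k` samples
    (K : ℕ) (hK : 1 ≤ K)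
    (X : (k : ℕ) → (Fin k → S) → EuclideanSpace ℝ (Fin n))
    (hupdate : ∀ (k : ℕ) (ω : Fin k → S) (s : S) (y : EuclideanSpace ℝ (Fin n)),
      fmod (X k ω) (X (k + 1) (Fin.snoc ω s)) s + w (X (k + 1) (Fin.snoc ω s))
          + (ρ + κ + τ + α * (G ‖X k ω‖ + 1) * Real.sqrt K) / 2
              * ‖X (k + 1) (Fin.snoc ω s) - X k ω‖ ^ 2
        ≤ fmod (X k ω) y s + w y
          + (ρ + κ + τ + α * (G ‖X k ω‖ + 1) * Real.sqrt K) / 2 * ‖y - X k ω‖ ^ 2)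
    -- integrability of the step length over the fresh sample
    (hstep_int : ∀ (k : ℕ) (ω : Fin k → S),
      Integrable (fun s => ‖X (k + 1) (Fin.snoc ω s) - X k ω‖) μ) :
    ∀ (k : ℕ), 1 ≤ k → k < K → ∀ ω : Fin k → S,
      (∫ s, ‖X (k + 1) (Fin.snoc ω s) - X k ω‖ ∂μ)
        ≤ 2 * (Lf + Lw) / (α * Real.sqrt K) := by

  intro k hk1 hkK ω
  set x := X k ω with hx
  set g := G ‖x‖ with hgdef
  clear_value g
  have hg : 0 ≤ g := hgdef ▸ hG_nonneg _
  have hKpos : (0:ℝ) < (K:ℝ) := by exact_mod_cast Nat.lt_of_lt_of_le Nat.zero_lt_one hK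
  set sK := Real.sqrt K with hsKdef
  clear_value sK
  have hsK : 0 < sK := hsKdef ▸ Real.sqrt_pos.mpr hKpos
  set γ := ρ + κ + τ + α * (g + 1) * sK with hγdef
  clear_value γ
  have hαgs : 0 < α * (g + 1) * sK :=
    mul_pos (mul_pos hα (by linarith)) hsK
  have hρ0 : 0 < ρ := lt_of_le_of_lt (by linarith) hρ
  have hγ : 0 < γ := by rw [hγdef]; linarith
  -- pointwise bound
  have key : ∀ s, ‖X (k + 1) (Fin.snoc ω s) - x‖ ≤ 2 / γ * (Lfs s * g + Lw) := by
    intro s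
    set z := X (k + 1) (Fin.snoc ω s) with hz
    set d := ‖z - x‖ with hd
    have hdnn : 0 ≤ d := norm_nonneg _
    have h1 := hupdate k ω s x
    rw [sub_self, norm_zero] at h1
    simp only [← hx, ← hz, ← hd, ← hgdef, ← hsKdef, ← hγdef] at h1
    have hC := hC1 x x z s
    rw [norm_sub_rev] at hC
    simp only [← hgdef, ← hd] at hC
    have hwl : w x - w z ≤ Lw * d := by
      have := (abs_le.mp (hw_lip x z)).2
      rw [norm_sub_rev] at this
      simpa [← hd] using this
    have hCnn : 0 ≤ Lfs s * g + Lw := by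
      have := mul_nonneg (hLfs_nonneg s) hg; linarith
    have hmain : γ / 2 * d ^ 2 ≤ (Lfs s * g + Lw) * d := by nlinarith
    rcases eq_or_lt_of_le hdnn with hd0 | hdpos
    · rw [← hd0]
      exact mul_nonneg (div_nonneg (by norm_num) hγ.le) hCnn
    · rw [div_mul_eq_mul_div, le_div_iff₀ hγ]
      nlinarith
  -- integrability of Lfs
  have hLfs_meas : AEStronglyMeasurable Lfs μ := by
    have h2 := hLfs_int.aestronglyMeasurable
    have heq : (fun s => Real.sqrt (Lfs s ^ 2)) = Lfs :=
      funext fun s => Real.sqrt_sq (hLfs_nonneg s)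
    rw [← heq]
    exact Real.continuous_sqrt.comp_aestronglyMeasurable h2
  have hIntLfs : Integrable Lfs μ := by
    refine Integrable.mono' (hLfs_int.add (integrable_const 1)) hLfs_meas ?_
    refine ae_of_all _ fun s => ?_
    simp only [Pi.add_apply]
    rw [Real.norm_eq_abs, abs_of_nonneg (hLfs_nonneg s)]
    nlinarith [sq_nonneg (Lfs s - 1)]
  -- first moment bound via variance
  set m := ∫ s, Lfs s ∂μ with hm
  clear_value m
  have hm0 : 0 ≤ m := hm ▸ integral_nonneg hLfs_nonneg
  have hmLf : m ≤ Lf := by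
    have e1 : Integrable (fun s => 2 * m * Lfs s) μ := hIntLfs.const_mul (2 * m)
    have e2 : Integrable (fun s => Lfs s ^ 2 - 2 * m * Lfs s) μ := hLfs_int.sub e1
    have hvar : 0 ≤ ∫ s, (Lfs s - m) ^ 2 ∂μ := integral_nonneg fun s => sq_nonneg _
    have hexp : (∫ s, (Lfs s - m) ^ 2 ∂μ)
        = ∫ s, (Lfs s ^ 2 - 2 * m * Lfs s) + m ^ 2 ∂μ := by
      congr 1; funext s; ring
    rw [hexp, integral_add e2 (integrable_const _), integral_sub hLfs_int e1,
      integral_const_mul, integral_const] at hvar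
    simp only [← hm, measure_univ, ENNReal.toReal_one, one_smul, smul_eq_mul, probReal_univ] at hvar
    nlinarith
  -- put it together
  have hInt2 : Integrable (fun s => 2 / γ * (Lfs s * g + Lw)) μ :=
    ((hIntLfs.mul_const g).add (integrable_const Lw)).const_mul _
  have step1 : (∫ s, ‖X (k + 1) (Fin.snoc ω s) - x‖ ∂μ)
      ≤ ∫ s, 2 / γ * (Lfs s * g + Lw) ∂μ :=
    integral_mono (hstep_int k ω) hInt2 key
  have step2 : (∫ s, 2 / γ * (Lfs s * g + Lw) ∂μ) = 2 / γ * (m * g + Lw) := by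
    rw [integral_const_mul, integral_add (hIntLfs.mul_const g) (integrable_const Lw),
      integral_mul_const, integral_const]
    simp [← hm]
  have step3 : 2 / γ * (m * g + Lw) ≤ 2 * (Lf + Lw) / (α * sK) := by
    have h1 : 2 / γ * (m * g + Lw) ≤ 2 / γ * (Lf * g + Lw) := by
      have h2 : m * g ≤ Lf * g := mul_le_mul_of_nonneg_right hmLf hg
      have h2γ : 0 ≤ 2 / γ := div_nonneg (by norm_num) hγ.le
      exact mul_le_mul_of_nonneg_left (by linarith) h2γ
    refine le_trans h1 ?_
    rw [div_mul_eq_mul_div, div_le_div_iff₀ hγ (mul_pos hα hsK)]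
    have hγge : α * (g + 1) * sK ≤ γ := by rw [hγdef]; linarith
    have hLfLw : 0 ≤ Lf + Lw := by linarith
    have h3 : (Lf + Lw) * (α * (g + 1) * sK) - (Lf * g + Lw) * (α * sK)
        = (α * sK) * (Lw * g + Lf) := by ring
    have h4 : 0 ≤ (α * sK) * (Lw * g + Lf) :=
      mul_nonneg (mul_nonneg hα.le hsK.le) (add_nonneg (mul_nonneg hLw hg) hLf)
    have h5 : 2 * (Lf + Lw) * (α * (g + 1) * sK) ≤ 2 * (Lf + Lw) * γ := by
      have := mul_le_mul_of_nonneg_left hγge (by linarith : (0:ℝ) ≤ 2 * (Lf + Lw))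
      linarith
    nlinarith
  calc (∫ s, ‖X (k + 1) (Fin.snoc ω s) - x‖ ∂μ) ≤ 2 / γ * (m * g + Lw) := by
        rw [← step2]; exact step1
    _ ≤ 2 * (Lf + Lw) / (α * sK) := step3
end

section
/- Clipped ratio bound for independent random variables (squared version): Let X and Y be independent nonnegative real-valued random variables with E[|X − Y|²] ≤ σ², and let α > 0. Then E[ X² / max{Y², α²} ] ≤ ((σ + α)/α)². -/
open MeasureTheory

/-- **Lemma 3.3, first bound** (clipped ratio bound, squared version).
If `X` and `Y` are independent nonnegative random variables with `E[|X - Y|²] ≤ σ²`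
and `α > 0`, then `E[X² / max{Y², α²}] ≤ ((σ + α)/α)²`. -/
theorem clipped_ratio_bound_sq
    {Ω : Type*} [MeasurableSpace Ω] (μ : Measure Ω) [IsProbabilityMeasure μ]
    (X Y : Ω → ℝ) (σ α : ℝ)
    (hX_meas : Measurable X) (hY_meas : Measurable Y)
    (hX_nonneg : ∀ ω, 0 ≤ X ω) (hY_nonneg : ∀ ω, 0 ≤ Y ω)
    (hindep : ProbabilityTheory.IndepFun X Y μ)
    (hσ : 0 ≤ σ) (hα : 0 < α)
    (hdiff_int : Integrable (fun ω => |X ω - Y ω| ^ 2) μ)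
    (hdiff : ∫ ω, |X ω - Y ω| ^ 2 ∂μ ≤ σ ^ 2) :
    ∫ ω, X ω ^ 2 / max (Y ω ^ 2) (α ^ 2) ∂μ ≤ ((σ + α) / α) ^ 2 := by
  have hf_meas : Measurable fun ω => |X ω - Y ω| := (hX_meas.sub hY_meas).abs
  have hf_int : Integrable (fun ω => |X ω - Y ω|) μ := by
    refine (hdiff_int.add (integrable_const 1)).mono' hf_meas.aestronglyMeasurable ?_
    filter_upwards with ω
    simp only [Real.norm_eq_abs, abs_abs, Pi.add_apply]
    nlinarith [sq_nonneg (|X ω - Y ω| - 1), abs_nonneg (X ω - Y ω)]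
  -- Jensen: (E|X-Y|)² ≤ E|X-Y|² ≤ σ², hence E|X-Y| ≤ σ
  have hEf : ∫ ω, |X ω - Y ω| ∂μ ≤ σ := by
    have hconv : ConvexOn ℝ Set.univ fun x : ℝ => x ^ 2 := Even.convexOn_pow even_two
    have hj := hconv.map_integral_le (continuous_pow 2).continuousOn isClosed_univ
      (Filter.Eventually.of_forall fun _ => Set.mem_univ _) hf_int hdiff_int
    have h0 : 0 ≤ ∫ ω, |X ω - Y ω| ∂μ := integral_nonneg fun ω => abs_nonneg _
    nlinarith [le_trans hj hdiff]
  -- pointwise bound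
  have hpt : ∀ ω, X ω ^ 2 / max (Y ω ^ 2) (α ^ 2) ≤ (|X ω - Y ω| + α) ^ 2 / α ^ 2 := by
    intro ω
    set M := max (Y ω) α with hM
    have hMα : α ≤ M := le_max_right _ _
    have hMpos : 0 < M := lt_of_lt_of_le hα hMα
    have hfnn : 0 ≤ |X ω - Y ω| := abs_nonneg _
    have hmax : max (Y ω ^ 2) (α ^ 2) = M ^ 2 := by
      rcases le_total (Y ω) α with h | h
      · rw [hM, max_eq_right h, max_eq_right (by nlinarith [hY_nonneg ω] : Y ω ^ 2 ≤ α ^ 2)]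
      · rw [hM, max_eq_left h, max_eq_left (by nlinarith [hY_nonneg ω] : α ^ 2 ≤ Y ω ^ 2)]
    rw [hmax]
    have hXle : X ω ≤ |X ω - Y ω| + M := by
      have h1 := le_abs_self (X ω - Y ω)
      have h2 := le_max_left (Y ω) α
      linarith
    have h1 : X ω ^ 2 / M ^ 2 ≤ (|X ω - Y ω| + M) ^ 2 / M ^ 2 := by
      gcongr
      exact hX_nonneg ω
    refine h1.trans ?_
    have hdiv : |X ω - Y ω| / M ≤ |X ω - Y ω| / α :=
      div_le_div_of_nonneg_left hfnn hα hMα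
    have e1 : (|X ω - Y ω| + M) ^ 2 / M ^ 2 = (|X ω - Y ω| / M + 1) ^ 2 := by
      field_simp
    have e2 : (|X ω - Y ω| + α) ^ 2 / α ^ 2 = (|X ω - Y ω| / α + 1) ^ 2 := by
      field_simp
    rw [e1, e2]
    have h2 : (0:ℝ) ≤ |X ω - Y ω| / M + 1 := by positivity
    nlinarith
  -- integrability of the dominating function
  have hg_int : Integrable (fun ω => (|X ω - Y ω| + α) ^ 2 / α ^ 2) μ := by
    have h1 : Integrable (fun ω => |X ω - Y ω| ^ 2 + (|X ω - Y ω| * (2 * α) + α ^ 2)) μ :=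
      hdiff_int.add ((hf_int.mul_const _).add (integrable_const _))
    refine (h1.div_const (α ^ 2)).congr ?_
    filter_upwards with ω
    ring
  -- integrate the pointwise bound
  have hint : ∫ ω, X ω ^ 2 / max (Y ω ^ 2) (α ^ 2) ∂μ
      ≤ ∫ ω, (|X ω - Y ω| + α) ^ 2 / α ^ 2 ∂μ := by
    refine integral_mono_of_nonneg ?_ hg_int (Filter.Eventually.of_forall hpt)
    filter_upwards with ω
    have : (0:ℝ) < max (Y ω ^ 2) (α ^ 2) := lt_max_of_lt_right (by positivity)
    positivity
  refine hint.trans ?_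
  have hexp : ∫ ω, (|X ω - Y ω| + α) ^ 2 / α ^ 2 ∂μ
      = (∫ ω, |X ω - Y ω| ^ 2 ∂μ) * (α ^ 2)⁻¹ + (∫ ω, |X ω - Y ω| ∂μ) * (2 / α) + 1 := by
    have e : ∀ ω, (|X ω - Y ω| + α) ^ 2 / α ^ 2
        = |X ω - Y ω| ^ 2 * (α ^ 2)⁻¹ + |X ω - Y ω| * (2 / α) + 1 := by
      intro ω
      generalize |X ω - Y ω| = t
      field_simp
      ring
    simp_rw [e]
    have hI1 : Integrable (fun ω => |X ω - Y ω| ^ 2 * (α ^ 2)⁻¹ + |X ω - Y ω| * (2 / α)) μ :=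
      (hdiff_int.mul_const _).add (hf_int.mul_const _)
    rw [integral_add hI1 (integrable_const 1),
      integral_add (hdiff_int.mul_const _) (hf_int.mul_const _),
      integral_mul_const, integral_mul_const, integral_const]
    simp
  rw [hexp]
  have hf0 : 0 ≤ ∫ ω, |X ω - Y ω| ∂μ := integral_nonneg fun ω => abs_nonneg _
  have key : (∫ ω, |X ω - Y ω| ^ 2 ∂μ) * (α ^ 2)⁻¹ + (∫ ω, |X ω - Y ω| ∂μ) * (2 / α) + 1
      ≤ σ ^ 2 * (α ^ 2)⁻¹ + σ * (2 / α) + 1 := by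
    gcongr
  refine key.trans (le_of_eq ?_)
  field_simp
  ring
end

section
/- Tail bound on the iterate norm under unknown Lipschitz continuity: Let ρ > κ + τ and run x^{k+1} = argmin_x { f_{x^k}(x,ξ^k) + ω(x) + (γ_k/2)‖x − x^k‖² } with i.i.d. samples ξ^k ∼ Ξ, where at each step an additional independent sample ξ' ∼ Ξ is drawn and γ_k = ρ + τ + κ + max{ Lip(x^k, ξ'), α } √K with α > 0. Then for every a > 0 and every 2 ≤ k ≤ K, P{ ‖x^k‖ ≥ B_{aΔ} + 4(α + σ + L_ω)/(α√K) } ≤ 2Δ/(aΔ + Λ), where Δ = ψ_{1/ρ}(x¹) + Λ + (ρ/α²)(α + σ + L_ω)² > 0. -/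
open MeasureTheory RealInnerProductSpace

section Aux

variable {E : Type*} [NormedAddCommGroup E] [InnerProductSpace ℝ E]

lemma aux_inner_affine_convexOn (v : E) (c : ℝ) :
    ConvexOn ℝ Set.univ (fun y : E => ⟪y, v⟫ + c) := by
  refine ⟨convex_univ, fun p _ q _ a b ha hb hab => le_of_eq ?_⟩
  simp only [inner_add_left, real_inner_smul_left, smul_eq_mul]
  linear_combination (-c) * hab

lemma aux_strong_min (g : E → ℝ) (hg : ConvexOn ℝ Set.univ g) (m : ℝ) (hm : 0 ≤ m)
    (u : E) (hmin : ∀ y, g u ≤ g y + m / 2 * ‖y - u‖ ^ 2) (y : E) : g u ≤ g y := by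
  by_contra hlt
  push_neg at hlt
  set d := g u - g y with hd
  have hd0 : 0 < d := by simp only [hd]; linarith
  set R := m / 2 * ‖y - u‖ ^ 2 with hR
  have hR0 : 0 ≤ R := by positivity
  set t := d / (R + d) with ht
  have hRd : 0 < R + d := by linarith
  have htpos : 0 < t := div_pos hd0 hRd
  have ht1 : t ≤ 1 := by
    rw [ht, div_le_one hRd]; linarith
  have hz := hg.2 (Set.mem_univ u) (Set.mem_univ y) (by linarith : (0:ℝ) ≤ 1 - t) htpos.le
    (by ring)
  have hmin' := hmin ((1 - t) • u + t • y)
  have hvec : ((1 - t) • u + t • y) - u = t • (y - u) := by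
    rw [sub_smul, one_smul, smul_sub]; abel
  have hnorm : ‖((1 - t) • u + t • y) - u‖ ^ 2 = t ^ 2 * ‖y - u‖ ^ 2 := by
    rw [hvec, norm_smul, Real.norm_eq_abs, abs_of_pos htpos, mul_pow]
  rw [hnorm] at hmin'
  simp only [smul_eq_mul] at hz
  have h1 : g u ≤ (1 - t) * g u + t * g y + R * t ^ 2 := by
    calc g u ≤ g ((1 - t) • u + t • y) + m / 2 * (t ^ 2 * ‖y - u‖ ^ 2) := hmin'
    _ ≤ (1 - t) * g u + t * g y + R * t ^ 2 := by rw [hR]; nlinarith [hz]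
  have h2 : t * d ≤ R * t ^ 2 := by nlinarith
  have h3 : d ≤ R * t := by
    have := (mul_le_mul_iff_right₀ htpos).mp (by nlinarith : t * d ≤ t * (R * t))
    linarith
  have h4 : t * (R + d) = d := by
    rw [ht, div_mul_cancel₀]; exact ne_of_gt hRd
  nlinarith

lemma aux_growth (φ : E → ℝ) (hφ : ConvexOn ℝ Set.univ φ)
    (w : E → ℝ) (κ : ℝ) (hw : ConvexOn ℝ Set.univ (fun y => w y + κ / 2 * ‖y‖ ^ 2))
    (γ : ℝ) (hγκ : κ ≤ γ) (x u : E)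
    (hmin : ∀ y, φ u + w u + γ / 2 * ‖u - x‖ ^ 2 ≤ φ y + w y + γ / 2 * ‖y - x‖ ^ 2) :
    ∀ y, φ u + w u + γ / 2 * ‖u - x‖ ^ 2 + (γ - κ) / 2 * ‖y - u‖ ^ 2
      ≤ φ y + w y + γ / 2 * ‖y - x‖ ^ 2 := by
  set g : E → ℝ := fun y => φ y + w y + γ / 2 * ‖y - x‖ ^ 2 - (γ - κ) / 2 * ‖y - u‖ ^ 2
    with hgdef
  have hgeq : ∀ y, g y = φ y + (w y + κ / 2 * ‖y‖ ^ 2)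
      + (⟪y, (γ - κ) • u - γ • x⟫ + (γ / 2 * ‖x‖ ^ 2 - (γ - κ) / 2 * ‖u‖ ^ 2)) := by
    intro y
    simp only [hgdef, inner_sub_right, real_inner_smul_right]
    rw [norm_sub_sq_real y x, norm_sub_sq_real y u]
    ring
  have hgconv : ConvexOn ℝ Set.univ g := by
    rw [show g = fun y => φ y + (w y + κ / 2 * ‖y‖ ^ 2)
      + (⟪y, (γ - κ) • u - γ • x⟫ + (γ / 2 * ‖x‖ ^ 2 - (γ - κ) / 2 * ‖u‖ ^ 2)) from
      funext hgeq]
    exact (hφ.add hw).add (aux_inner_affine_convexOn _ _)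
  have hmin' : ∀ y, g u ≤ g y + (γ - κ) / 2 * ‖y - u‖ ^ 2 := by
    intro y
    have := hmin y
    simp only [hgdef, sub_self, norm_zero]
    ring_nf
    ring_nf at this
    nlinarith [this]
  have := aux_strong_min g hgconv (γ - κ) (by linarith) u hmin'
  intro y
  have hy := this y
  simp only [hgdef, sub_self, norm_zero] at hy
  nlinarith [hy]

end Aux
set_option maxHeartbeats 1600000 in
/-- **Lemma 3.5** (tail bound on the iterate norm under unknown Lipschitz continuity).
The algorithm is run for `K` steps on the product space `Fin K → S × S` carrying the
i.i.d. product of `μ ⊗ μ` (each coordinate is the pair `(ξ^k, ξ'^k)`): `X k`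
(representing `x^{k+1}`, `X 0 = x¹`) depends only on the first `k` coordinates and
`X (k+1)` minimizes the regularized model built at `X k` with sample `ξ^k`, with
adaptive stepsize `γ_k = ρ + τ + κ + max{Lip(x^k, ξ'), α}√K`.  Under A6, A7, for every
`a > 0` and every `2 ≤ k ≤ K`,
`P{‖x^k‖ ≥ B_{aΔ} + 4(α+σ+L_ω)/(α√K)} ≤ 2Δ/(aΔ + Λ)`, where
`Δ = ψ_{1/ρ}(x¹) + Λ + (ρ/α²)(α+σ+L_ω)²`. -/
theorem tail_bound_unknown_lipschitz
    {n : ℕ} {S : Type*} [MeasurableSpace S] (μ : Measure S) [IsProbabilityMeasure μ]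
    (f w ψ : EuclideanSpace ℝ (Fin n) → ℝ)
    (fmod : EuclideanSpace ℝ (Fin n) → EuclideanSpace ℝ (Fin n) → S → ℝ)
    (Lip : EuclideanSpace ℝ (Fin n) → S → ℝ) (κ τ ρ Lw σ Λ α : ℝ) (B : ℝ → ℝ)
    (prox : EuclideanSpace ℝ (Fin n) → EuclideanSpace ℝ (Fin n))
    (moreau : EuclideanSpace ℝ (Fin n) → ℝ)
    -- basic parameter assumptions
    (hκ : 0 ≤ κ) (hτ : 0 ≤ τ) (hρ : κ + τ < ρ) (hα : 0 < α)
    (hLw : 0 ≤ Lw) (hσ : 0 ≤ σ)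
    -- composite objective
    (hψdef : ∀ x, ψ x = f x + w x)
    -- A2: `w` is κ-weakly convex and L_ω-Lipschitz
    (hw_weak : ConvexOn ℝ Set.univ (fun x => w x + κ / 2 * ‖x‖ ^ 2))
    (hw_lip : ∀ x y, |w x - w y| ≤ Lw * ‖x - y‖)
    -- A3: properties of the stochastic model
    (hmodel_conv : ∀ x s, ConvexOn ℝ Set.univ (fun y => fmod x y s))
    (hmodel_int : ∀ x y, Integrable (fun s => fmod x y s) μ)
    (hmodel_center : ∀ x, ∫ s, fmod x x s ∂μ = f x)
    (hmodel_acc : ∀ x y, (∫ s, fmod x y s ∂μ) - f y ≤ τ / 2 * ‖x - y‖ ^ 2)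
    -- D1: sample-dependent Lipschitz continuity
    (hLip_nonneg : ∀ x s, 0 ≤ Lip x s)
    (hLip_meas : ∀ x, Measurable (Lip x))
    (hD1 : ∀ x y z s, fmod x z s - fmod x y s ≤ Lip x s * ‖z - y‖)
    -- D2: reference Lipschitz continuity
    (hLip_sq_int : ∀ x, Integrable (fun s => Lip x s ^ 2) μ)
    (hD2 : ∀ x, ∫ s, ∫ s', |Lip x s - Lip x s'| ^ 2 ∂μ ∂μ ≤ σ ^ 2)
    -- Moreau envelope `ψ_{1/ρ}` and proximal mapping `prox = prox_{ψ/ρ}`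
    (hprox : ∀ x z, ψ (prox x) + ρ / 2 * ‖prox x - x‖ ^ 2 ≤ ψ z + ρ / 2 * ‖z - x‖ ^ 2)
    (hmoreau : ∀ x, moreau x = ψ (prox x) + ρ / 2 * ‖prox x - x‖ ^ 2)
    -- A6: lower bound on the Moreau envelope;  A7: bounded level sets
    (hΛ : 0 ≤ Λ) (hA6 : ∀ x, -Λ ≤ moreau x)
    (hA7 : ∀ v x, B v ≤ ‖x‖ → v ≤ moreau x)
    -- the algorithm with adaptive stepsize `γ_k = ρ + τ + κ + max{Lip(x^k,ξ'), α}√K`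
    (K : ℕ) (hK : 1 ≤ K)
    (X : ℕ → (Fin K → S × S) → EuclideanSpace ℝ (Fin n))
    (x1 : EuclideanSpace ℝ (Fin n)) (hX0 : ∀ ω, X 0 ω = x1)
    (hXmeas : ∀ k, Measurable (X k))
    (hXadapt : ∀ k, ∀ ω ω' : Fin K → S × S,
      (∀ i : Fin K, (i : ℕ) < k → ω i = ω' i) → X k ω = X k ω')
    (hupdate : ∀ k (hk : k < K) (ω : Fin K → S × S) (y : EuclideanSpace ℝ (Fin n)),
      fmod (X k ω) (X (k + 1) ω) (ω ⟨k, hk⟩).1 + w (X (k + 1) ω)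
          + (ρ + τ + κ + max (Lip (X k ω) (ω ⟨k, hk⟩).2) α * Real.sqrt K) / 2
              * ‖X (k + 1) ω - X k ω‖ ^ 2
        ≤ fmod (X k ω) y (ω ⟨k, hk⟩).1 + w y
          + (ρ + τ + κ + max (Lip (X k ω) (ω ⟨k, hk⟩).2) α * Real.sqrt K) / 2
              * ‖y - X k ω‖ ^ 2)
    (hmint : ∀ k, Integrable (fun ω => moreau (X k ω))
      (Measure.pi fun _ : Fin K => μ.prod μ)) :
    ∀ a : ℝ, 0 < a → ∀ k : ℕ, 1 ≤ k → k < K →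
      (Measure.pi fun _ : Fin K => μ.prod μ)
          {ω | B (a * (moreau x1 + Λ + ρ / α ^ 2 * (α + σ + Lw) ^ 2))
                  + 4 * (α + σ + Lw) / (α * Real.sqrt K) ≤ ‖X k ω‖}
        ≤ ENNReal.ofReal (2 * (moreau x1 + Λ + ρ / α ^ 2 * (α + σ + Lw) ^ 2)
            / (a * (moreau x1 + Λ + ρ / α ^ 2 * (α + σ + Lw) ^ 2) + Λ)) := by
  obtain ⟨m, rfl⟩ : ∃ m, K = m + 1 := ⟨K - 1, (Nat.succ_pred_eq_of_pos hK).symm⟩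
  intro a ha k hk1 hkK
  have hρ0 : 0 < ρ := lt_of_le_of_lt (by linarith) hρ
  have hKR1 : (1:ℝ) ≤ ((m + 1 : ℕ) : ℝ) := by exact_mod_cast hK
  have hKRpos : (0:ℝ) < ((m + 1 : ℕ) : ℝ) := by linarith
  have hsq1 : 1 ≤ Real.sqrt ((m + 1 : ℕ) : ℝ) := Real.one_le_sqrt.mpr hKR1
  have hsqpos : 0 < Real.sqrt ((m + 1 : ℕ) : ℝ) := by linarith
  have hsqsq : Real.sqrt ((m + 1 : ℕ) : ℝ) ^ 2 = ((m + 1 : ℕ) : ℝ) :=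
    Real.sq_sqrt (le_of_lt hKRpos)
  have hSne : Nonempty S := by
    by_contra h
    rw [not_nonempty_iff] at h
    have h1 : (μ Set.univ) = 1 := measure_univ
    rw [Set.univ_eq_empty_iff.mpr h, measure_empty] at h1
    exact zero_ne_one h1
  set P : Measure (Fin (m + 1) → S × S) := Measure.pi fun _ => μ.prod μ with hPdef
  -- the per-step error constant
  set ERR : ℝ := 3 / 4 * ρ * ((α ^ 2 * ((m + 1 : ℕ) : ℝ))⁻¹ * (σ + Lw + α) ^ 2) with hERRdef
  have hERR0 : 0 ≤ ERR := by positivity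
  -- ===== deterministic one-step key inequality =====
  have key : ∀ (x xp : EuclideanSpace ℝ (Fin n)) (s s' : S),
      (∀ y : EuclideanSpace ℝ (Fin n), fmod x xp s + w xp
          + (ρ + τ + κ + max (Lip x s') α * Real.sqrt ((m + 1 : ℕ) : ℝ)) / 2 * ‖xp - x‖ ^ 2
        ≤ fmod x y s + w y
          + (ρ + τ + κ + max (Lip x s') α * Real.sqrt ((m + 1 : ℕ) : ℝ)) / 2 * ‖y - x‖ ^ 2) →
      moreau xp ≤ moreau x
        + ((fmod x (prox x) s - fmod x x s + (w (prox x) - w x)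
              + κ / 2 * ‖prox x - x‖ ^ 2)
            * (ρ / (ρ + τ + max (Lip x s') α * Real.sqrt ((m + 1 : ℕ) : ℝ)))
          + 3 / 4 * ρ * ((Lip x s + Lw) ^ 2
              * ((max (Lip x s') α * Real.sqrt ((m + 1 : ℕ) : ℝ)) ^ 2)⁻¹)) := by
    intro x xp s s' hmin
    set M : ℝ := max (Lip x s') α * Real.sqrt ((m + 1 : ℕ) : ℝ) with hMdef
    have hMpos : 0 < M := mul_pos (lt_of_lt_of_le hα (le_max_right _ _)) hsqpos
    have growth := aux_growth (fun y => fmod x y s) (hmodel_conv x s) w κ hw_weak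
      (ρ + τ + κ + M) (by linarith) x xp hmin
    have hd1 : fmod x x s - fmod x xp s ≤ Lip x s * ‖xp - x‖ := by
      have := hD1 x xp x s
      rwa [norm_sub_rev] at this
    have hwlip1 : w x - w xp ≤ Lw * ‖xp - x‖ := by
      have h1 := hw_lip x xp
      rw [norm_sub_rev] at h1
      have h2 := le_abs_self (w x - w xp)
      linarith
    have hL0 : 0 ≤ Lip x s + Lw := add_nonneg (hLip_nonneg x s) hLw
    -- comparison point y = x
    have hstep0 := growth x
    simp only [sub_self, norm_zero] at hstep0
    norm_num at hstep0
    rw [norm_sub_rev x xp] at hstep0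
    have hnn0 : 0 ≤ (2 * ρ + 2 * τ + κ) * ‖xp - x‖ ^ 2 := by positivity
    have hMδ2 : M * ‖xp - x‖ ^ 2 ≤ (Lip x s + Lw) * ‖xp - x‖ := by
      linarith [hstep0, hd1, hwlip1, hnn0]
    have hMδ : M * ‖xp - x‖ ≤ Lip x s + Lw := by
      rcases eq_or_lt_of_le (norm_nonneg (xp - x)) with h0 | h0
      · rw [← h0]; simpa using hL0
      · nlinarith [hMδ2]
    have hδle : ‖xp - x‖ ≤ (Lip x s + Lw) / M := by
      rw [le_div_iff₀ hMpos]; linarith [hMδ]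
    -- comparison point y = prox x
    have hstep1 := growth (prox x)
    have hexp : ‖prox x - xp‖ ^ 2
        = ‖prox x - x‖ ^ 2 - 2 * ⟪prox x - x, xp - x⟫ + ‖xp - x‖ ^ 2 := by
      rw [show prox x - xp = (prox x - x) - (xp - x) by abel]
      exact norm_sub_sq_real _ _
    rw [hexp] at hstep1
    have h4M : (0:ℝ) < 4 * M := by positivity
    have hsup : (Lip x s + Lw) * ‖xp - x‖ - M * ‖xp - x‖ ^ 2
        ≤ (Lip x s + Lw) ^ 2 / (4 * M) := by
      have h1 : ((Lip x s + Lw) * ‖xp - x‖ - M * ‖xp - x‖ ^ 2) * (4 * M)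
          ≤ (Lip x s + Lw) ^ 2 := by
        nlinarith [sq_nonneg (2 * M * ‖xp - x‖ - (Lip x s + Lw))]
      have h2 := (div_le_div_iff_of_pos_right h4M).mpr h1
      rwa [mul_div_cancel_right₀ _ (ne_of_gt h4M)] at h2
    have hcross : -((ρ + τ + M) * ⟪prox x - x, xp - x⟫)
        ≤ (fmod x (prox x) s - fmod x x s + (w (prox x) - w x)
            + κ / 2 * ‖prox x - x‖ ^ 2) + (Lip x s + Lw) ^ 2 / (4 * M) := by
      linarith [hstep1, hd1, hwlip1, hnn0, hsup]
    -- Moreau envelope comparison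
    have hmor : moreau xp ≤ ψ (prox x) + ρ / 2 * ‖prox x - xp‖ ^ 2 := by
      rw [hmoreau xp]; exact hprox xp (prox x)
    rw [hexp] at hmor
    have hmorx : moreau x = ψ (prox x) + ρ / 2 * ‖prox x - x‖ ^ 2 := hmoreau x
    have hCpos : 0 < ρ + τ + M := by linarith
    have hCne : ρ + τ + M ≠ 0 := ne_of_gt hCpos
    have hMne : M ≠ 0 := ne_of_gt hMpos
    have hρC : 0 ≤ ρ / (ρ + τ + M) := by positivity
    have h5 := mul_le_mul_of_nonneg_left hcross hρC
    have hEq : ρ / (ρ + τ + M) * -((ρ + τ + M) * ⟪prox x - x, xp - x⟫)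
        = -(ρ * ⟪prox x - x, xp - x⟫) := by
      field_simp
    rw [hEq] at h5
    have h6 : ρ / (ρ + τ + M) * ((Lip x s + Lw) ^ 2 / (4 * M))
        ≤ ρ * ((Lip x s + Lw) ^ 2 * (M ^ 2)⁻¹) / 4 := by
      have hd : ρ / (ρ + τ + M) ≤ ρ / M := by gcongr; linarith
      have h61 := mul_le_mul_of_nonneg_right hd
        (by positivity : (0:ℝ) ≤ (Lip x s + Lw) ^ 2 / (4 * M))
      have heq2 : ρ / M * ((Lip x s + Lw) ^ 2 / (4 * M))
          = ρ * ((Lip x s + Lw) ^ 2 * (M ^ 2)⁻¹) / 4 := by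
        ring
      linarith [h61, heq2]
    have h7 : ρ / 2 * ‖xp - x‖ ^ 2 ≤ ρ / 2 * ((Lip x s + Lw) ^ 2 * (M ^ 2)⁻¹) := by
      have h71 := pow_le_pow_left₀ (norm_nonneg (xp - x)) hδle 2
      have heq3 : ((Lip x s + Lw) / M) ^ 2 = (Lip x s + Lw) ^ 2 * (M ^ 2)⁻¹ := by
        rw [div_pow, div_eq_mul_inv]
      rw [heq3] at h71
      nlinarith [h71]
    linarith [hmor, h5, h6, h7, hmorx]
  -- ===== integrability and expectation bound of the error function =====
  have herr : ∀ x : EuclideanSpace ℝ (Fin n),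
      Integrable (fun c : S × S =>
        (fmod x (prox x) c.1 - fmod x x c.1 + (w (prox x) - w x)
              + κ / 2 * ‖prox x - x‖ ^ 2)
            * (ρ / (ρ + τ + max (Lip x c.2) α * Real.sqrt ((m + 1 : ℕ) : ℝ)))
          + 3 / 4 * ρ * ((Lip x c.1 + Lw) ^ 2
              * ((max (Lip x c.2) α * Real.sqrt ((m + 1 : ℕ) : ℝ)) ^ 2)⁻¹)) (μ.prod μ)
      ∧ (∫ c : S × S,
        ((fmod x (prox x) c.1 - fmod x x c.1 + (w (prox x) - w x)
              + κ / 2 * ‖prox x - x‖ ^ 2)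
            * (ρ / (ρ + τ + max (Lip x c.2) α * Real.sqrt ((m + 1 : ℕ) : ℝ)))
          + 3 / 4 * ρ * ((Lip x c.1 + Lw) ^ 2
              * ((max (Lip x c.2) α * Real.sqrt ((m + 1 : ℕ) : ℝ)) ^ 2)⁻¹)) ∂(μ.prod μ))
        ≤ ERR := by
    intro x
    have hMpos' : ∀ s' : S, 0 < max (Lip x s') α * Real.sqrt ((m + 1 : ℕ) : ℝ) :=
      fun s' => mul_pos (lt_of_lt_of_le hα (le_max_right _ _)) hsqpos
    -- Q integrable
    have hQeq : (fun s : S => fmod x (prox x) s - fmod x x s + (w (prox x) - w x)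
          + κ / 2 * ‖prox x - x‖ ^ 2)
        = fun s => (fmod x (prox x) s - fmod x x s)
          + ((w (prox x) - w x) + κ / 2 * ‖prox x - x‖ ^ 2) := by
      funext s; ring
    have hQsub : Integrable (fun s : S => fmod x (prox x) s - fmod x x s) μ :=
      (hmodel_int x (prox x)).sub (hmodel_int x x)
    have hQint : Integrable (fun s : S => fmod x (prox x) s - fmod x x s
        + (w (prox x) - w x) + κ / 2 * ‖prox x - x‖ ^ 2) μ := by
      rw [hQeq]
      exact hQsub.add (integrable_const _)
    -- C integrable
    have hCmeas : Measurable (fun s' : S =>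
        ρ / (ρ + τ + max (Lip x s') α * Real.sqrt ((m + 1 : ℕ) : ℝ))) :=
      measurable_const.div ((((hLip_meas x).max measurable_const).mul_const _).const_add (ρ + τ))
    have hCint : Integrable (fun s' : S =>
        ρ / (ρ + τ + max (Lip x s') α * Real.sqrt ((m + 1 : ℕ) : ℝ))) μ := by
      apply (integrable_const (1:ℝ)).mono' hCmeas.aestronglyMeasurable
      apply Filter.Eventually.of_forall
      intro s'
      have h1 := hMpos' s'
      rw [Real.norm_eq_abs, abs_of_nonneg (by positivity)]
      rw [div_le_one (by linarith)]
      linarith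
    -- Lip integrable
    have hLip1 : Integrable (fun s : S => Lip x s) μ := by
      apply ((integrable_const (1:ℝ)).add (hLip_sq_int x)).mono'
        (hLip_meas x).aestronglyMeasurable
      apply Filter.Eventually.of_forall
      intro s
      simp only [Pi.add_apply]
      rw [Real.norm_eq_abs, abs_of_nonneg (hLip_nonneg x s)]
      nlinarith [sq_nonneg (Lip x s - 1)]
    -- E integrable
    have hEint : Integrable (fun s : S => (Lip x s + Lw) ^ 2) μ := by
      have h1 : (fun s : S => (Lip x s + Lw) ^ 2)
          = fun s => Lip x s ^ 2 + 2 * Lw * Lip x s + Lw ^ 2 := by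
        funext s; ring
      rw [h1]
      exact ((hLip_sq_int x).add (hLip1.const_mul (2 * Lw))).add (integrable_const _)
    -- G integrable
    have hGmeas : Measurable (fun s' : S =>
        ((max (Lip x s') α * Real.sqrt ((m + 1 : ℕ) : ℝ)) ^ 2)⁻¹) :=
      ((((hLip_meas x).max measurable_const).mul_const _).pow_const 2).inv
    have hGbd : ∀ s' : S, ‖((max (Lip x s') α * Real.sqrt ((m + 1 : ℕ) : ℝ)) ^ 2)⁻¹‖
        ≤ (α ^ 2 * ((m + 1 : ℕ) : ℝ))⁻¹ := by
      intro s'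
      have h1 : α ^ 2 * ((m + 1 : ℕ) : ℝ)
          ≤ (max (Lip x s') α * Real.sqrt ((m + 1 : ℕ) : ℝ)) ^ 2 := by
        rw [mul_pow, hsqsq]
        have h2 : α ^ 2 ≤ (max (Lip x s') α) ^ 2 :=
          pow_le_pow_left₀ hα.le (le_max_right _ _) 2
        nlinarith [hKRpos]
      rw [Real.norm_eq_abs, abs_of_nonneg (by positivity)]
      exact inv_anti₀ (by positivity) h1
    have hGint : Integrable (fun s' : S =>
        ((max (Lip x s') α * Real.sqrt ((m + 1 : ℕ) : ℝ)) ^ 2)⁻¹) μ := by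
      apply (integrable_const ((α ^ 2 * ((m + 1 : ℕ) : ℝ))⁻¹)).mono'
        hGmeas.aestronglyMeasurable
      exact Filter.Eventually.of_forall hGbd
    -- the two pieces
    have ht1 : Integrable (fun c : S × S =>
        (fmod x (prox x) c.1 - fmod x x c.1 + (w (prox x) - w x)
            + κ / 2 * ‖prox x - x‖ ^ 2)
          * (ρ / (ρ + τ + max (Lip x c.2) α * Real.sqrt ((m + 1 : ℕ) : ℝ)))) (μ.prod μ) :=
      hQint.mul_prod hCint
    have ht2 : Integrable (fun c : S × S =>
        3 / 4 * ρ * ((Lip x c.1 + Lw) ^ 2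
          * ((max (Lip x c.2) α * Real.sqrt ((m + 1 : ℕ) : ℝ)) ^ 2)⁻¹)) (μ.prod μ) :=
      (hEint.mul_prod hGint).const_mul (3 / 4 * ρ)
    refine ⟨ht1.add ht2, ?_⟩
    rw [integral_add ht1 ht2]
    -- first piece is ≤ 0
    have hQle : (∫ s, (fmod x (prox x) s - fmod x x s + (w (prox x) - w x)
        + κ / 2 * ‖prox x - x‖ ^ 2) ∂μ) ≤ 0 := by
      rw [hQeq, integral_add hQsub (integrable_const _),
        integral_sub (hmodel_int x (prox x)) (hmodel_int x x),
        integral_const, hmodel_center]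
      simp only [measure_univ, ENNReal.toReal_one, probReal_univ, one_smul, smul_eq_mul, one_mul]
      have hacc := hmodel_acc x (prox x)
      rw [norm_sub_rev] at hacc
      have hpx := hprox x x
      simp only [sub_self, norm_zero] at hpx
      norm_num at hpx
      rw [hψdef x, hψdef (prox x)] at hpx
      have hnn : 0 ≤ (ρ - (κ + τ)) * ‖prox x - x‖ ^ 2 :=
        mul_nonneg (by linarith) (sq_nonneg _)
      linarith
    have hCge : 0 ≤ ∫ s' : S, ρ / (ρ + τ + max (Lip x s') α
        * Real.sqrt ((m + 1 : ℕ) : ℝ)) ∂μ :=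
      integral_nonneg fun s' => by positivity
    have ht1le : (∫ c : S × S,
        (fmod x (prox x) c.1 - fmod x x c.1 + (w (prox x) - w x)
            + κ / 2 * ‖prox x - x‖ ^ 2)
          * (ρ / (ρ + τ + max (Lip x c.2) α * Real.sqrt ((m + 1 : ℕ) : ℝ))) ∂(μ.prod μ))
        ≤ 0 := by
      rw [integral_prod_mul (f := fun s : S => fmod x (prox x) s - fmod x x s
          + (w (prox x) - w x) + κ / 2 * ‖prox x - x‖ ^ 2)
        (g := fun s' : S => ρ / (ρ + τ + max (Lip x s') α * Real.sqrt ((m + 1 : ℕ) : ℝ)))]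
      have := mul_le_mul_of_nonneg_right hQle hCge
      simpa using this
    -- second piece
    have hDmeas : Measurable (fun c : S × S => |Lip x c.1 - Lip x c.2|) :=
      (((hLip_meas x).comp measurable_fst).sub ((hLip_meas x).comp measurable_snd)).abs
    have hfst : Integrable (fun c : S × S => Lip x c.1 ^ 2) (μ.prod μ) := by
      simpa using (hLip_sq_int x).mul_prod (integrable_const (1:ℝ))
    have hsnd : Integrable (fun c : S × S => Lip x c.2 ^ 2) (μ.prod μ) := by
      simpa using (integrable_const (1:ℝ)).mul_prod (hLip_sq_int x)
    have hD2i : Integrable (fun c : S × S => |Lip x c.1 - Lip x c.2| ^ 2) (μ.prod μ) := by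
      apply ((hfst.const_mul 2).add (hsnd.const_mul 2)).mono'
        (hDmeas.pow_const 2).aestronglyMeasurable
      apply Filter.Eventually.of_forall
      intro c
      simp only [Pi.add_apply]
      rw [Real.norm_eq_abs, abs_of_nonneg (by positivity), sq_abs]
      nlinarith [sq_nonneg (Lip x c.1 + Lip x c.2)]
    have hDi : Integrable (fun c : S × S => |Lip x c.1 - Lip x c.2|) (μ.prod μ) := by
      apply ((integrable_const (1:ℝ)).add hD2i).mono' hDmeas.aestronglyMeasurable
      apply Filter.Eventually.of_forall
      intro c
      simp only [Pi.add_apply]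
      rw [Real.norm_eq_abs, abs_abs]
      nlinarith [sq_nonneg (|Lip x c.1 - Lip x c.2| - 1)]
    have hD2val : (∫ c : S × S, |Lip x c.1 - Lip x c.2| ^ 2 ∂(μ.prod μ)) ≤ σ ^ 2 := by
      rw [integral_prod _ hD2i]
      exact hD2 x
    have hDnn : 0 ≤ ∫ c : S × S, |Lip x c.1 - Lip x c.2| ∂(μ.prod μ) :=
      integral_nonneg fun c => abs_nonneg _
    have hDval : (∫ c : S × S, |Lip x c.1 - Lip x c.2| ∂(μ.prod μ)) ≤ σ := by
      set I := ∫ c : S × S, |Lip x c.1 - Lip x c.2| ∂(μ.prod μ) with hI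
      have hexp2 : (fun c : S × S => (|Lip x c.1 - Lip x c.2| - I) ^ 2)
          = fun c => |Lip x c.1 - Lip x c.2| ^ 2
            - 2 * I * |Lip x c.1 - Lip x c.2| + I ^ 2 := by
        funext c; ring
      have h0 : 0 ≤ ∫ c : S × S, (|Lip x c.1 - Lip x c.2| - I) ^ 2 ∂(μ.prod μ) :=
        integral_nonneg fun c => sq_nonneg _
      have hDmul : Integrable (fun c : S × S => 2 * I * |Lip x c.1 - Lip x c.2|)
          (μ.prod μ) := hDi.const_mul (2 * I)
      have hDsub : Integrable (fun c : S × S =>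
          |Lip x c.1 - Lip x c.2| ^ 2 - 2 * I * |Lip x c.1 - Lip x c.2|) (μ.prod μ) :=
        hD2i.sub hDmul
      rw [hexp2, integral_add hDsub (integrable_const _),
        integral_sub hD2i hDmul, integral_const_mul _ _, integral_const] at h0
      simp only [measure_univ, ENNReal.toReal_one, probReal_univ, one_smul, smul_eq_mul, one_mul] at h0
      nlinarith [hD2val]
    -- pointwise bound for the second piece
    have hpt2 : ∀ c : S × S,
        3 / 4 * ρ * ((Lip x c.1 + Lw) ^ 2
          * ((max (Lip x c.2) α * Real.sqrt ((m + 1 : ℕ) : ℝ)) ^ 2)⁻¹)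
        ≤ 3 / 4 * ρ * ((α ^ 2 * ((m + 1 : ℕ) : ℝ))⁻¹
            * (|Lip x c.1 - Lip x c.2| + (Lw + α)) ^ 2) := by
      intro c
      have hL1 : 0 ≤ Lip x c.1 + Lw := add_nonneg (hLip_nonneg x c.1) hLw
      have hmx : 0 < max (Lip x c.2) α := lt_of_lt_of_le hα (le_max_right _ _)
      have e1 : α * (Lip x c.1 - Lip x c.2) ≤ α * |Lip x c.1 - Lip x c.2| :=
        mul_le_mul_of_nonneg_left (le_abs_self _) hα.le
      have e2 : α * |Lip x c.1 - Lip x c.2| ≤ max (Lip x c.2) α * |Lip x c.1 - Lip x c.2| :=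
        mul_le_mul_of_nonneg_right (le_max_right _ _) (abs_nonneg _)
      have e3 : α * Lw ≤ max (Lip x c.2) α * Lw :=
        mul_le_mul_of_nonneg_right (le_max_right _ _) hLw
      have e4 : α * Lip x c.2 ≤ α * max (Lip x c.2) α :=
        mul_le_mul_of_nonneg_left (le_max_left _ _) hα.le
      have h1 : α * (Lip x c.1 + Lw)
          ≤ max (Lip x c.2) α * (|Lip x c.1 - Lip x c.2| + (Lw + α)) := by nlinarith
      have h2 : (α * (Lip x c.1 + Lw)) ^ 2
          ≤ (max (Lip x c.2) α * (|Lip x c.1 - Lip x c.2| + (Lw + α))) ^ 2 :=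
        pow_le_pow_left₀ (by positivity) h1 2
      have h3 : (Lip x c.1 + Lw) ^ 2 * (α ^ 2 * ((m + 1 : ℕ) : ℝ))
          ≤ (|Lip x c.1 - Lip x c.2| + (Lw + α)) ^ 2
            * ((max (Lip x c.2) α) ^ 2 * ((m + 1 : ℕ) : ℝ)) := by nlinarith [h2, hKRpos]
      have h4 : (Lip x c.1 + Lw) ^ 2
            * ((max (Lip x c.2) α * Real.sqrt ((m + 1 : ℕ) : ℝ)) ^ 2)⁻¹
          ≤ (α ^ 2 * ((m + 1 : ℕ) : ℝ))⁻¹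
            * (|Lip x c.1 - Lip x c.2| + (Lw + α)) ^ 2 := by
        rw [mul_pow, hsqsq, ← div_eq_mul_inv, inv_mul_eq_div,
          div_le_div_iff₀ (mul_pos (pow_pos hmx 2) hKRpos) (mul_pos (pow_pos hα 2) hKRpos)]
        exact h3
      exact mul_le_mul_of_nonneg_left h4 (by nlinarith [hρ0] : (0:ℝ) ≤ 3 / 4 * ρ)
    -- integral bound for the second piece
    have hBeq : (fun c : S × S => 3 / 4 * ρ * ((α ^ 2 * ((m + 1 : ℕ) : ℝ))⁻¹
          * (|Lip x c.1 - Lip x c.2| + (Lw + α)) ^ 2))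
        = fun c => (3 / 4 * ρ * (α ^ 2 * ((m + 1 : ℕ) : ℝ))⁻¹)
          * (|Lip x c.1 - Lip x c.2| ^ 2
            + 2 * (Lw + α) * |Lip x c.1 - Lip x c.2| + (Lw + α) ^ 2) := by
      funext c; ring
    have hc0 : (0:ℝ) ≤ 3 / 4 * ρ * (α ^ 2 * ((m + 1 : ℕ) : ℝ))⁻¹ :=
      mul_nonneg (by nlinarith [hρ0]) (inv_nonneg.mpr (by positivity))
    have hBint : Integrable (fun c : S × S => 3 / 4 * ρ * ((α ^ 2 * ((m + 1 : ℕ) : ℝ))⁻¹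
        * (|Lip x c.1 - Lip x c.2| + (Lw + α)) ^ 2)) (μ.prod μ) := by
      rw [hBeq]
      exact (((hD2i.add (hDi.const_mul (2 * (Lw + α)))).add (integrable_const _)).const_mul _)
    have ht2le : (∫ c : S × S, 3 / 4 * ρ * ((Lip x c.1 + Lw) ^ 2
        * ((max (Lip x c.2) α * Real.sqrt ((m + 1 : ℕ) : ℝ)) ^ 2)⁻¹) ∂(μ.prod μ))
        ≤ ERR := by
      calc (∫ c : S × S, 3 / 4 * ρ * ((Lip x c.1 + Lw) ^ 2
          * ((max (Lip x c.2) α * Real.sqrt ((m + 1 : ℕ) : ℝ)) ^ 2)⁻¹) ∂(μ.prod μ))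
          ≤ ∫ c : S × S, 3 / 4 * ρ * ((α ^ 2 * ((m + 1 : ℕ) : ℝ))⁻¹
            * (|Lip x c.1 - Lip x c.2| + (Lw + α)) ^ 2) ∂(μ.prod μ) :=
          integral_mono ht2 hBint (fun c => hpt2 c)
        _ = (3 / 4 * ρ * (α ^ 2 * ((m + 1 : ℕ) : ℝ))⁻¹)
            * ((∫ c : S × S, |Lip x c.1 - Lip x c.2| ^ 2 ∂(μ.prod μ))
              + 2 * (Lw + α) * (∫ c : S × S, |Lip x c.1 - Lip x c.2| ∂(μ.prod μ))
              + (Lw + α) ^ 2) := by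
            have hB2 : Integrable (fun c : S × S =>
                2 * (Lw + α) * |Lip x c.1 - Lip x c.2|) (μ.prod μ) :=
              hDi.const_mul (2 * (Lw + α))
            have hB1 : Integrable (fun c : S × S => |Lip x c.1 - Lip x c.2| ^ 2
                + 2 * (Lw + α) * |Lip x c.1 - Lip x c.2|) (μ.prod μ) := hD2i.add hB2
            rw [hBeq, integral_const_mul _ _, integral_add hB1 (integrable_const _),
              integral_add hD2i hB2, integral_const_mul _ _, integral_const]
            simp only [measure_univ, ENNReal.toReal_one, probReal_univ, one_smul, smul_eq_mul, one_mul]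
        _ ≤ (3 / 4 * ρ * (α ^ 2 * ((m + 1 : ℕ) : ℝ))⁻¹)
            * (σ ^ 2 + 2 * (Lw + α) * σ + (Lw + α) ^ 2) := by
            apply mul_le_mul_of_nonneg_left _ hc0
            have h9 := mul_le_mul_of_nonneg_left hDval
              (by positivity : (0:ℝ) ≤ 2 * (Lw + α))
            linarith [hD2val]
        _ = ERR := by rw [hERRdef]; ring
    linarith [ht1le, ht2le]
  -- ===== one-step integral inequality =====
  have step : ∀ j, j < m + 1 →
      (∫ ω, moreau (X (j + 1) ω) ∂P) ≤ (∫ ω, moreau (X j ω) ∂P) + ERR := by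
    intro j hj
    set e := MeasurableEquiv.piFinSuccAbove (fun _ : Fin (m + 1) => S × S) ⟨j, hj⟩ with hedef
    have mp : MeasurePreserving e P
        ((μ.prod μ).prod (Measure.pi fun _ : Fin m => μ.prod μ)) :=
      measurePreserving_piFinSuccAbove (fun _ => μ.prod μ) ⟨j, hj⟩
    have mps : MeasurePreserving e.symm
        ((μ.prod μ).prod (Measure.pi fun _ : Fin m => μ.prod μ)) P := mp.symm
    have htrans : ∀ k2 : ℕ, Integrable
        (fun p : (S × S) × (Fin m → S × S) => moreau (X k2 (e.symm p)))
        ((μ.prod μ).prod (Measure.pi fun _ : Fin m => μ.prod μ)) := by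
      intro k2
      have h1 := integrable_map_equiv
        (μ := (μ.prod μ).prod (Measure.pi fun _ : Fin m => μ.prod μ))
        e.symm (fun ω => moreau (X k2 ω))
      rw [mps.map_eq] at h1
      exact h1.mp (hmint k2)
    have htint : ∀ k2 : ℕ, (∫ p, moreau (X k2 (e.symm p))
        ∂((μ.prod μ).prod (Measure.pi fun _ : Fin m => μ.prod μ)))
        = ∫ ω, moreau (X k2 ω) ∂P := fun k2 =>
      mps.integral_comp' (fun ω => moreau (X k2 ω))
    have hcoord : ∀ (c : S × S) (r : Fin m → S × S), e.symm (c, r) ⟨j, hj⟩ = c := by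
      intro c r
      simp [hedef, MeasurableEquiv.piFinSuccAbove_symm_apply]
    have hXj_eq : ∀ (c c' : S × S) (r : Fin m → S × S),
        X j (e.symm (c, r)) = X j (e.symm (c', r)) := by
      intro c c' r
      apply hXadapt
      intro i hi
      have hine : i ≠ ⟨j, hj⟩ := by
        intro h
        rw [h] at hi
        simp at hi
      obtain ⟨z, hz⟩ := Fin.exists_succAbove_eq hine
      rw [← hz]
      simp [hedef, MeasurableEquiv.piFinSuccAbove_symm_apply,
        Fin.insertNth_apply_succAbove]
    obtain ⟨s0⟩ := hSne
    have hg1i : Integrable (fun r : Fin m → S × S =>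
        ∫ c : S × S, moreau (X (j + 1) (e.symm (c, r))) ∂(μ.prod μ))
        (Measure.pi fun _ : Fin m => μ.prod μ) := (htrans (j + 1)).integral_prod_right
    have hg2i : Integrable (fun r : Fin m → S × S =>
        ∫ c : S × S, moreau (X j (e.symm (c, r))) ∂(μ.prod μ))
        (Measure.pi fun _ : Fin m => μ.prod μ) := (htrans j).integral_prod_right
    have hae : ∀ᵐ r ∂(Measure.pi fun _ : Fin m => μ.prod μ),
        (∫ c : S × S, moreau (X (j + 1) (e.symm (c, r))) ∂(μ.prod μ))
        ≤ (∫ c : S × S, moreau (X j (e.symm (c, r))) ∂(μ.prod μ)) + ERR := by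
      filter_upwards [(htrans (j + 1)).prod_left_ae] with r hr
      set x := X j (e.symm ((s0, s0), r)) with hxdef
      have hXc : ∀ c : S × S, X j (e.symm (c, r)) = x := fun c => hXj_eq c (s0, s0) r
      have hpt : ∀ c : S × S, moreau (X (j + 1) (e.symm (c, r)))
          ≤ moreau x + ((fmod x (prox x) c.1 - fmod x x c.1 + (w (prox x) - w x)
                + κ / 2 * ‖prox x - x‖ ^ 2)
              * (ρ / (ρ + τ + max (Lip x c.2) α * Real.sqrt ((m + 1 : ℕ) : ℝ)))
            + 3 / 4 * ρ * ((Lip x c.1 + Lw) ^ 2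
                * ((max (Lip x c.2) α * Real.sqrt ((m + 1 : ℕ) : ℝ)) ^ 2)⁻¹)) := by
        intro c
        have hupd := hupdate j hj (e.symm (c, r))
        rw [hcoord c r, hXc c] at hupd
        exact key x (X (j + 1) (e.symm (c, r))) c.1 c.2 hupd
      calc (∫ c : S × S, moreau (X (j + 1) (e.symm (c, r))) ∂(μ.prod μ))
          ≤ ∫ c : S × S, (moreau x
              + ((fmod x (prox x) c.1 - fmod x x c.1 + (w (prox x) - w x)
                    + κ / 2 * ‖prox x - x‖ ^ 2)
                  * (ρ / (ρ + τ + max (Lip x c.2) α * Real.sqrt ((m + 1 : ℕ) : ℝ)))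
                + 3 / 4 * ρ * ((Lip x c.1 + Lw) ^ 2
                    * ((max (Lip x c.2) α * Real.sqrt ((m + 1 : ℕ) : ℝ)) ^ 2)⁻¹)))
              ∂(μ.prod μ) :=
            integral_mono hr ((integrable_const _).add (herr x).1) hpt
        _ = moreau x + ∫ c : S × S,
              ((fmod x (prox x) c.1 - fmod x x c.1 + (w (prox x) - w x)
                    + κ / 2 * ‖prox x - x‖ ^ 2)
                  * (ρ / (ρ + τ + max (Lip x c.2) α * Real.sqrt ((m + 1 : ℕ) : ℝ)))
                + 3 / 4 * ρ * ((Lip x c.1 + Lw) ^ 2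
                    * ((max (Lip x c.2) α * Real.sqrt ((m + 1 : ℕ) : ℝ)) ^ 2)⁻¹))
              ∂(μ.prod μ) := by
            rw [integral_add (integrable_const _) (herr x).1, integral_const]
            simp
        _ ≤ moreau x + ERR := by linarith [(herr x).2]
        _ = (∫ c : S × S, moreau (X j (e.symm (c, r))) ∂(μ.prod μ)) + ERR := by
            simp only [hXc]
            rw [integral_const]
            simp
    have hsum : Integrable (fun r : Fin m → S × S =>
        (∫ c : S × S, moreau (X j (e.symm (c, r))) ∂(μ.prod μ)) + ERR)
        (Measure.pi fun _ : Fin m => μ.prod μ) := hg2i.add (integrable_const _)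
    have hfin := integral_mono_ae hg1i hsum hae
    rw [integral_add hg2i (integrable_const _), integral_const] at hfin

    simp only [measure_univ, ENNReal.toReal_one, probReal_univ, one_smul, smul_eq_mul, one_mul] at hfin
    rw [← htint (j + 1), ← htint j,
      integral_prod_symm _ (htrans (j + 1)), integral_prod_symm _ (htrans j)]
    exact hfin
  -- ===== telescoping =====
  have tel : ∀ j, j ≤ m + 1 → (∫ ω, moreau (X j ω) ∂P) ≤ moreau x1 + j * ERR := by
    intro j
    induction j with
    | zero =>
      intro _
      simp only [hX0, Nat.cast_zero, zero_mul, add_zero]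
      rw [integral_const]
      simp
    | succ j ih =>
      intro hj
      have hj1 : j < m + 1 := by omega
      have := step j hj1
      have h2 := ih (by omega)
      push_cast
      push_cast at h2
      linarith
  -- ===== Markov + conclusion =====
  set Δ : ℝ := moreau x1 + Λ + ρ / α ^ 2 * (α + σ + Lw) ^ 2 with hΔdef
  have hαsLw : 0 < α + σ + Lw := by linarith
  have hΔpos : 0 < Δ := by
    have h1 := hA6 x1
    have h2 : 0 < ρ / α ^ 2 * (α + σ + Lw) ^ 2 :=
      mul_pos (div_pos hρ0 (pow_pos hα 2)) (pow_pos hαsLw 2)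
    simp only [hΔdef]
    linarith
  have hεpos : 0 < a * Δ + Λ := by nlinarith
  -- expectation bound
  have hIbound : (∫ ω, (moreau (X k ω) + Λ) ∂P) ≤ Δ := by
    rw [integral_add (hmint k) (integrable_const _), integral_const]
    simp only [measure_univ, ENNReal.toReal_one, probReal_univ, one_smul, smul_eq_mul]
    have h1 := tel k (le_of_lt hkK)
    have h2 : (k : ℝ) * ERR ≤ ((m + 1 : ℕ) : ℝ) * ERR := by
      apply mul_le_mul_of_nonneg_right _ hERR0
      exact_mod_cast le_of_lt hkK
    have h3 : ((m + 1 : ℕ) : ℝ) * ERR ≤ ρ / α ^ 2 * (α + σ + Lw) ^ 2 := by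
      rw [hERRdef]
      have hKne : ((m + 1 : ℕ) : ℝ) ≠ 0 := ne_of_gt hKRpos
      have hexp : ((m + 1 : ℕ) : ℝ) * (3 / 4 * ρ * ((α ^ 2 * ((m + 1 : ℕ) : ℝ))⁻¹
          * (σ + Lw + α) ^ 2)) = 3 / 4 * (ρ / α ^ 2 * (σ + Lw + α) ^ 2) := by
        field_simp
      rw [hexp]
      have h4 : (σ + Lw + α) ^ 2 = (α + σ + Lw) ^ 2 := by ring
      rw [h4]
      have h5 : 0 ≤ ρ / α ^ 2 * (α + σ + Lw) ^ 2 := by positivity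
      linarith
    simp only [hΔdef]
    linarith
  -- event inclusion
  have hincl : {ω | B (a * Δ) + 4 * (α + σ + Lw) / (α * Real.sqrt ((m + 1 : ℕ) : ℝ))
        ≤ ‖X k ω‖} ⊆ {ω | a * Δ + Λ ≤ moreau (X k ω) + Λ} := by
    intro ω hω
    simp only [Set.mem_setOf_eq] at hω ⊢
    have hoff : 0 ≤ 4 * (α + σ + Lw) / (α * Real.sqrt ((m + 1 : ℕ) : ℝ)) := by positivity
    have hB : B (a * Δ) ≤ ‖X k ω‖ := by linarith
    have := hA7 (a * Δ) (X k ω) hB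
    linarith
  -- Markov
  have hnonneg : 0 ≤ᵐ[P] fun ω => moreau (X k ω) + Λ :=
    Filter.Eventually.of_forall fun ω => by have := hA6 (X k ω); simp; linarith
  have hfint : Integrable (fun ω => moreau (X k ω) + Λ) P := (hmint k).add (integrable_const _)
  have hmar := mul_meas_ge_le_integral_of_nonneg hnonneg hfint (a * Δ + Λ)
  have hPA : (P {ω | a * Δ + Λ ≤ moreau (X k ω) + Λ}).toReal ≤ Δ / (a * Δ + Λ) := by
    rw [le_div_iff₀ hεpos]
    calc (P {ω | a * Δ + Λ ≤ moreau (X k ω) + Λ}).toReal * (a * Δ + Λ)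
        = (a * Δ + Λ) * (P {ω | a * Δ + Λ ≤ moreau (X k ω) + Λ}).toReal := by ring
      _ ≤ ∫ ω, (moreau (X k ω) + Λ) ∂P := hmar
      _ ≤ Δ := hIbound
  calc P {ω | B (a * Δ) + 4 * (α + σ + Lw) / (α * Real.sqrt ((m + 1 : ℕ) : ℝ))
        ≤ ‖X k ω‖}
      ≤ P {ω | a * Δ + Λ ≤ moreau (X k ω) + Λ} := measure_mono hincl
    _ = ENNReal.ofReal ((P {ω | a * Δ + Λ ≤ moreau (X k ω) + Λ}).toReal) :=
        (ENNReal.ofReal_toReal (measure_ne_top _ _)).symm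
    _ ≤ ENNReal.ofReal (Δ / (a * Δ + Λ)) := ENNReal.ofReal_le_ofReal hPA
    _ ≤ ENNReal.ofReal (2 * Δ / (a * Δ + Λ)) := by
        apply ENNReal.ofReal_le_ofReal
        gcongr
        linarith
end

section
/- One-step contraction for convex stochastic optimization under standard Lipschitz continuity: Let x ∈ ℝⁿ be fixed, γ > 0, and let x⁺(ξ) = argmin_y { f_x(y,ξ) + ω(y) + (γ/2)‖y − x‖² } for ξ ∼ Ξ. Then for any optimal solution x* of min ψ, E_ξ[‖x⁺(ξ) − x*‖²] ≤ ‖x − x*‖² − (2/γ)[ψ(x) − ψ(x*)] + (L_f + L_ω)²/γ². -/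
open MeasureTheory
open scoped RealInnerProductSpace

lemma combo_norm_sq' {E : Type*} [NormedAddCommGroup E] [InnerProductSpace ℝ E]
    (t : ℝ) (p q : E) :
    ‖(1 - t) • p + t • q‖ ^ 2
      = (1 - t) * ‖p‖ ^ 2 + t * ‖q‖ ^ 2 - t * (1 - t) * ‖p - q‖ ^ 2 := by
  have h : ∀ z : E, ‖z‖ ^ 2 = ⟪z, z⟫ := by
    intro z; rw [real_inner_self_eq_norm_sq]
  rw [h, h, h, h]
  simp only [inner_add_left, inner_add_right, inner_sub_left, inner_sub_right,
    real_inner_smul_left, real_inner_smul_right, real_inner_comm p q]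
  ring

/-- Three-point inequality for a strongly-convex regularized minimization. -/
lemma three_point {E : Type*} [NormedAddCommGroup E] [InnerProductSpace ℝ E]
    (g : E → ℝ) (hg : ConvexOn ℝ Set.univ g) (γ : ℝ) (hγ : 0 < γ)
    (x a : E) (ha : ∀ y, g a + γ / 2 * ‖a - x‖ ^ 2 ≤ g y + γ / 2 * ‖y - x‖ ^ 2)
    (y : E) :
    g a + γ / 2 * ‖a - x‖ ^ 2 + γ / 2 * ‖a - y‖ ^ 2 ≤ g y + γ / 2 * ‖y - x‖ ^ 2 := by
  set D : ℝ := ‖a - y‖ ^ 2 with hD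
  have hDnn : 0 ≤ D := sq_nonneg _
  set C : ℝ := γ / 2 * D with hCdef
  have hCnn : 0 ≤ C := by positivity
  refine le_of_forall_pos_le_add fun ε hε => ?_
  set t : ℝ := min 1 (ε / (C + 1)) with htdef
  have ht0 : 0 < t := lt_min one_pos (div_pos hε (by linarith))
  have ht1 : t ≤ 1 := min_le_left _ _
  set m : E := (1 - t) • a + t • y with hm
  have h2 := ha m
  have h3 : g m ≤ (1 - t) * g a + t * g y := by
    have := hg.2 (Set.mem_univ a) (Set.mem_univ y)
      (by linarith : (0:ℝ) ≤ 1 - t) ht0.le (by ring)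
    simpa [smul_eq_mul] using this
  have hmx : m - x = (1 - t) • (a - x) + t • (y - x) := by
    rw [hm]; module
  have h4 : ‖m - x‖ ^ 2
      = (1 - t) * ‖a - x‖ ^ 2 + t * ‖y - x‖ ^ 2 - t * (1 - t) * D := by
    rw [hmx, combo_norm_sq']
    have : (a - x) - (y - x) = a - y := by abel
    rw [this]
  rw [h4] at h2
  have h5 : t * (g a + γ / 2 * ‖a - x‖ ^ 2 + (1 - t) * (γ / 2 * D))
      ≤ t * (g y + γ / 2 * ‖y - x‖ ^ 2) := by nlinarith [h2, h3]
  have h6 : g a + γ / 2 * ‖a - x‖ ^ 2 + (1 - t) * (γ / 2 * D)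
      ≤ g y + γ / 2 * ‖y - x‖ ^ 2 := le_of_mul_le_mul_left (by linarith) ht0
  have htC : t * C ≤ ε := by
    have h7 : t ≤ ε / (C + 1) := min_le_right _ _
    have h8 : t * C ≤ (ε / (C + 1)) * C := mul_le_mul_of_nonneg_right h7 hCnn
    have h9 : (ε / (C + 1)) * C ≤ ε := by
      rw [div_mul_eq_mul_div, div_le_iff₀ (by linarith)]
      nlinarith [hε.le, hCnn]
    linarith
  have : (1 - t) * (γ / 2 * D) = C - t * C := by rw [hCdef]; ring
  linarith [h6, htC, this.symm.le]

/-- **Lemma D.1** (one-step contraction for convex stochastic optimization under standard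
Lipschitz continuity).  `ψ = f + w` is convex (`τ = κ = 0`), `x*` is an optimal solution,
the models are convex, unbiased at the center, under-approximate `f` in expectation, and
satisfy B1.  For `γ > 0` and `x⁺(ξ)` the minimizer of the regularized model at `x`,
`E_ξ[‖x⁺(ξ) - x*‖²] ≤ ‖x - x*‖² - (2/γ)[ψ(x) - ψ(x*)] + (L_f + L_ω)²/γ²`. -/
theorem convex_one_step_standard_lipschitz
    {n : ℕ} {S : Type*} [MeasurableSpace S] (μ : Measure S) [IsProbabilityMeasure μ]
    (f w ψ : EuclideanSpace ℝ (Fin n) → ℝ)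
    (fmod : EuclideanSpace ℝ (Fin n) → EuclideanSpace ℝ (Fin n) → S → ℝ)
    (Lfs : S → ℝ) (γ Lf Lw : ℝ)
    -- basic parameter assumptions
    (hγ : 0 < γ) (hLf : 0 ≤ Lf) (hLw : 0 ≤ Lw)
    -- convex composite objective
    (hψdef : ∀ x, ψ x = f x + w x)
    (hf_conv : ConvexOn ℝ Set.univ f)
    (hw_conv : ConvexOn ℝ Set.univ w)
    (hw_lip : ∀ x y, |w x - w y| ≤ Lw * ‖x - y‖)
    -- properties of the stochastic model (with τ = 0)
    (hmodel_conv : ∀ x s, ConvexOn ℝ Set.univ (fun y => fmod x y s))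
    (hmodel_int : ∀ x y, Integrable (fun s => fmod x y s) μ)
    (hmodel_center : ∀ x, ∫ s, fmod x x s ∂μ = f x)
    (hmodel_under : ∀ x y, ∫ s, fmod x y s ∂μ ≤ f y)
    -- B1: standard Lipschitz continuity of the models
    (hB1 : ∀ x y z s, fmod x y s - fmod x z s ≤ Lfs s * ‖y - z‖)
    (hLfs_nonneg : ∀ s, 0 ≤ Lfs s)
    (hLfs_int : Integrable (fun s => Lfs s ^ 2) μ)
    (hLfs_bound : ∫ s, Lfs s ^ 2 ∂μ ≤ Lf ^ 2)
    -- an optimal solution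
    (xstar : EuclideanSpace ℝ (Fin n)) (hxstar : ∀ y, ψ xstar ≤ ψ y)
    -- the current point and the stochastic one-step update
    (x : EuclideanSpace ℝ (Fin n)) (xplus : S → EuclideanSpace ℝ (Fin n))
    (hupdate : ∀ s y,
      fmod x (xplus s) s + w (xplus s) + γ / 2 * ‖xplus s - x‖ ^ 2
        ≤ fmod x y s + w y + γ / 2 * ‖y - x‖ ^ 2)
    (hint : Integrable (fun s => ‖xplus s - xstar‖ ^ 2) μ) :
    ∫ s, ‖xplus s - xstar‖ ^ 2 ∂μ
      ≤ ‖x - xstar‖ ^ 2 - 2 / γ * (ψ x - ψ xstar) + (Lf + Lw) ^ 2 / γ ^ 2 := by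
  -- Pointwise key inequality (multiplied through by γ²)
  have key : ∀ s, γ ^ 2 * ‖xplus s - xstar‖ ^ 2
      ≤ γ ^ 2 * ‖x - xstar‖ ^ 2
        - 2 * γ * (fmod x x s + w x - fmod x xstar s - w xstar)
        + (Lfs s + Lw) ^ 2 := by
    intro s
    set a := xplus s with ha
    have hg : ConvexOn ℝ Set.univ (fun y => fmod x y s + w y) :=
      (hmodel_conv x s).add hw_conv
    have tp := three_point (fun y => fmod x y s + w y) hg γ hγ x a
      (fun y => hupdate s y) xstar
    have e5 : ‖xstar - x‖ = ‖x - xstar‖ := norm_sub_rev _ _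
    rw [e5] at tp
    have hB1' : fmod x x s - fmod x a s ≤ Lfs s * ‖a - x‖ := by
      have := hB1 x x a s
      rwa [norm_sub_rev] at this
    have hw' : w x - w a ≤ Lw * ‖a - x‖ := by
      have h1 := hw_lip x a
      have h2 : w x - w a ≤ |w x - w a| := le_abs_self _
      rw [norm_sub_rev] at h1
      linarith
    have e1 : 2 * γ * (fmod x x s - fmod x a s) ≤ 2 * γ * (Lfs s * ‖a - x‖) :=
      mul_le_mul_of_nonneg_left hB1' (by positivity)
    have e2 : 2 * γ * (w x - w a) ≤ 2 * γ * (Lw * ‖a - x‖) :=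
      mul_le_mul_of_nonneg_left hw' (by positivity)
    have e3 : 2 * γ * (fmod x a s + w a + γ / 2 * ‖a - x‖ ^ 2 + γ / 2 * ‖a - xstar‖ ^ 2)
        ≤ 2 * γ * (fmod x xstar s + w xstar + γ / 2 * ‖x - xstar‖ ^ 2) :=
      mul_le_mul_of_nonneg_left tp (by positivity)
    have e4 : 2 * γ * ((Lfs s + Lw) * ‖a - x‖) ≤ γ ^ 2 * ‖a - x‖ ^ 2 + (Lfs s + Lw) ^ 2 := by
      nlinarith [sq_nonneg (γ * ‖a - x‖ - (Lfs s + Lw))]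
    nlinarith [e1, e2, e3, e4]
  -- Integrability facts
  have hI1 : Integrable (fun s => fmod x x s) μ := hmodel_int x x
  have hI2 : Integrable (fun s => fmod x xstar s) μ := hmodel_int x xstar
  have hmeas : AEStronglyMeasurable Lfs μ := by
    have h2 := hLfs_int.aestronglyMeasurable
    have heq : Lfs = fun s => Real.sqrt (Lfs s ^ 2) :=
      funext fun s => (Real.sqrt_sq (hLfs_nonneg s)).symm
    rw [heq]
    exact Real.continuous_sqrt.comp_aestronglyMeasurable h2
  have hLint : Integrable Lfs μ := by
    refine Integrable.mono' (hLfs_int.add (integrable_const 1)) hmeas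
      (Filter.Eventually.of_forall fun s => ?_)
    simp only [Pi.add_apply, Real.norm_eq_abs, abs_of_nonneg (hLfs_nonneg s)]
    nlinarith [sq_nonneg (Lfs s - 1)]
  have hsq : Integrable (fun s => (Lfs s + Lw) ^ 2) μ := by
    have heq : (fun s => (Lfs s + Lw) ^ 2)
        = fun s => Lfs s ^ 2 + (2 * Lw) * Lfs s + Lw ^ 2 := funext fun s => by ring
    rw [heq]
    exact (hLfs_int.add (hLint.const_mul (2 * Lw))).add (integrable_const _)
  have hg1 : Integrable (fun s => fmod x x s + w x - fmod x xstar s - w xstar) μ :=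
    ((hI1.add (integrable_const (w x))).sub hI2).sub (integrable_const (w xstar))
  have hFint : Integrable (fun s =>
      γ ^ 2 * ‖x - xstar‖ ^ 2
        - 2 * γ * (fmod x x s + w x - fmod x xstar s - w xstar)
        + (Lfs s + Lw) ^ 2) μ :=
    ((integrable_const _).sub (hg1.const_mul (2 * γ))).add hsq
  -- integrate the pointwise inequality
  have hmono : ∫ s, γ ^ 2 * ‖xplus s - xstar‖ ^ 2 ∂μ
      ≤ ∫ s, (γ ^ 2 * ‖x - xstar‖ ^ 2
        - 2 * γ * (fmod x x s + w x - fmod x xstar s - w xstar)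
        + (Lfs s + Lw) ^ 2) ∂μ :=
    integral_mono (hint.const_mul _) hFint key
  rw [integral_const_mul] at hmono
  -- compute the right-hand side integral
  have hJ2 : Integrable (fun s => fmod x x s + w x) μ := hI1.add (integrable_const _)
  have hJ3 : Integrable (fun s => fmod x x s + w x - fmod x xstar s) μ := hJ2.sub hI2
  have hg1val : ∫ s, (fmod x x s + w x - fmod x xstar s - w xstar) ∂μ
      = f x + w x - (∫ s, fmod x xstar s ∂μ) - w xstar := by
    rw [integral_sub hJ3 (integrable_const _), integral_sub hJ2 hI2,
      integral_add hI1 (integrable_const _), hmodel_center]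
    simp
  have hqval : ∫ s, (Lfs s + Lw) ^ 2 ∂μ
      = (∫ s, Lfs s ^ 2 ∂μ) + 2 * Lw * (∫ s, Lfs s ∂μ) + Lw ^ 2 := by
    have heq : ∫ s, (Lfs s + Lw) ^ 2 ∂μ
        = ∫ s, (Lfs s ^ 2 + (2 * Lw) * Lfs s + Lw ^ 2) ∂μ :=
      integral_congr_ae (Filter.Eventually.of_forall fun s => by ring)
    have hK1 : Integrable (fun s => 2 * Lw * Lfs s) μ := hLint.const_mul _
    have hK2 : Integrable (fun s => Lfs s ^ 2 + 2 * Lw * Lfs s) μ := hLfs_int.add hK1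
    rw [heq, integral_add hK2 (integrable_const _), integral_add hLfs_int hK1,
      integral_const_mul]
    simp
  have hFval : ∫ s, (γ ^ 2 * ‖x - xstar‖ ^ 2
        - 2 * γ * (fmod x x s + w x - fmod x xstar s - w xstar)
        + (Lfs s + Lw) ^ 2) ∂μ
      = γ ^ 2 * ‖x - xstar‖ ^ 2
        - 2 * γ * (f x + w x - (∫ s, fmod x xstar s ∂μ) - w xstar)
        + ∫ s, (Lfs s + Lw) ^ 2 ∂μ := by
    have hK3 : Integrable
        (fun s => 2 * γ * (fmod x x s + w x - fmod x xstar s - w xstar)) μ :=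
      hg1.const_mul _
    have hK4 : Integrable (fun s => γ ^ 2 * ‖x - xstar‖ ^ 2
        - 2 * γ * (fmod x x s + w x - fmod x xstar s - w xstar)) μ :=
      (integrable_const _).sub hK3
    rw [integral_add hK4 hsq, integral_sub (integrable_const _) hK3,
      integral_const, integral_const_mul, hg1val]
    simp
  rw [hFval] at hmono
  -- Cauchy–Schwarz: ∫ Lfs ≤ Lf
  set m : ℝ := ∫ s, Lfs s ∂μ with hmdef
  have hm0 : 0 ≤ m := integral_nonneg hLfs_nonneg
  have hvar : 0 ≤ ∫ s, (Lfs s - m) ^ 2 ∂μ := integral_nonneg fun s => sq_nonneg _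
  have hvarval : ∫ s, (Lfs s - m) ^ 2 ∂μ = (∫ s, Lfs s ^ 2 ∂μ) - m ^ 2 := by
    have heq : ∫ s, (Lfs s - m) ^ 2 ∂μ
        = ∫ s, (Lfs s ^ 2 - (2 * m) * Lfs s + m ^ 2) ∂μ :=
      integral_congr_ae (Filter.Eventually.of_forall fun s => by ring)
    have hK5 : Integrable (fun s => 2 * m * Lfs s) μ := hLint.const_mul _
    have hK6 : Integrable (fun s => Lfs s ^ 2 - 2 * m * Lfs s) μ := hLfs_int.sub hK5
    rw [heq, integral_add hK6 (integrable_const _), integral_sub hLfs_int hK5,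
      integral_const_mul, ← hmdef]
    simp
    ring
  have hmLf : m ≤ Lf := by nlinarith [hvar, hvarval, hLfs_bound]
  have hqbound : ∫ s, (Lfs s + Lw) ^ 2 ∂μ ≤ (Lf + Lw) ^ 2 := by
    rw [hqval]
    nlinarith [hLfs_bound, hmLf, hm0]
  -- under-approximation bound
  have hunder := hmodel_under x xstar
  have hΔ : ψ x - ψ xstar ≤ f x + w x - (∫ s, fmod x xstar s ∂μ) - w xstar := by
    rw [hψdef x, hψdef xstar]; linarith
  have hstep : - (2 * γ * (f x + w x - (∫ s, fmod x xstar s ∂μ) - w xstar))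
      ≤ - (2 * γ * (ψ x - ψ xstar)) := by
    have := mul_le_mul_of_nonneg_left hΔ (by positivity : (0:ℝ) ≤ 2 * γ)
    linarith
  -- conclusion: divide by γ²
  have hγ2 : (0:ℝ) < γ ^ 2 := by positivity
  have hfinal : γ ^ 2 * ∫ s, ‖xplus s - xstar‖ ^ 2 ∂μ
      ≤ γ ^ 2 * (‖x - xstar‖ ^ 2 - 2 / γ * (ψ x - ψ xstar) + (Lf + Lw) ^ 2 / γ ^ 2) := by
    have hexp : γ ^ 2 * (‖x - xstar‖ ^ 2 - 2 / γ * (ψ x - ψ xstar) + (Lf + Lw) ^ 2 / γ ^ 2)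
        = γ ^ 2 * ‖x - xstar‖ ^ 2 - 2 * γ * (ψ x - ψ xstar) + (Lf + Lw) ^ 2 := by
      field_simp
    rw [hexp]
    linarith [hmono, hqbound, hstep]
  exact le_of_mul_le_mul_left hfinal hγ2
end

section
/- Convergence rate for convex stochastic optimization under standard Lipschitz continuity: Run x^{k+1} = argmin_x { f_{x^k}(x,ξ^k) + ω(x) + (γ/2)‖x − x^k‖² } with i.i.d. samples ξ^k ∼ Ξ and constant stepsize γ = α√K, α > 0. Then for any optimal solution x* of min ψ, min_{1≤k≤K} E[ψ(x^k) − ψ(x*)] ≤ (1/(2√K)) [ ‖x¹ − x*‖² α + (L_f + L_ω)²/α ]. -/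
open MeasureTheory

set_option maxHeartbeats 1000000

private theorem aux_prox {E : Type*} [NormedAddCommGroup E] [InnerProductSpace ℝ E]
    {g : E → ℝ} (hg : ConvexOn ℝ Set.univ g) {γ : ℝ} (hγ : 0 < γ) (x z y : E)
    (hz : ∀ u, g z + γ / 2 * ‖z - x‖ ^ 2 ≤ g u + γ / 2 * ‖u - x‖ ^ 2) :
    g z + γ / 2 * ‖z - x‖ ^ 2 + γ / 2 * ‖y - z‖ ^ 2 ≤ g y + γ / 2 * ‖y - x‖ ^ 2 := by
  set I : ℝ := inner ℝ (z - x) (y - z) with hI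
  set N : ℝ := ‖y - z‖ ^ 2 with hNdef
  have hN0 : (0:ℝ) ≤ N := by positivity
  have key : g z - g y ≤ γ * I := by
    refine le_of_forall_sub_le fun ε hε => ?_
    have hden : (0:ℝ) < γ * N + 2 * ε := by positivity
    set t : ℝ := min 1 (2 * ε / (γ * N + 2 * ε)) with ht
    have ht0 : 0 < t := lt_min one_pos (by positivity)
    have ht1 : t ≤ 1 := min_le_left _ _
    have hconv := hg.2 (Set.mem_univ z) (Set.mem_univ y)
      (by linarith : (0:ℝ) ≤ 1 - t) ht0.le (by ring)
    simp only [smul_eq_mul] at hconv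
    have hmin := hz ((1 - t) • z + t • y)
    have hpt : (1 - t) • z + t • y - x = (z - x) + t • (y - z) := by
      rw [sub_smul, one_smul, smul_sub]; abel
    have hnorm : ‖(1 - t) • z + t • y - x‖ ^ 2
        = ‖z - x‖ ^ 2 + 2 * (t * I) + t ^ 2 * N := by
      rw [hpt, norm_add_sq_real, real_inner_smul_right, norm_smul]
      rw [hI, hNdef]
      simp [abs_of_pos ht0]
      ring
    rw [hnorm] at hmin
    have h5 : g z + γ / 2 * ‖z - x‖ ^ 2
        ≤ ((1 - t) * g z + t * g y) + γ / 2 * (‖z - x‖ ^ 2 + 2 * (t * I) + t ^ 2 * N) :=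
      le_trans hmin (by linarith)
    have h6 : t * (g z - g y) ≤ t * (γ * I + γ / 2 * (t * N)) := by nlinarith [h5]
    have h7 : g z - g y ≤ γ * I + γ / 2 * (t * N) := le_of_mul_le_mul_left h6 ht0
    have h9 : t * (γ * N + 2 * ε) ≤ 2 * ε := (le_div_iff₀ hden).mp (min_le_right _ _)
    have h8 : γ / 2 * (t * N) ≤ ε := by nlinarith [mul_nonneg ht0.le hε.le]
    linarith
  have hyx : y - x = (y - z) + (z - x) := by abel
  have hexp : ‖y - x‖ ^ 2 = N + 2 * I + ‖z - x‖ ^ 2 := by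
    rw [hyx, norm_add_sq_real, real_inner_comm]
  nlinarith [key]

private theorem aux_sq_int {S : Type*} [MeasurableSpace S] (μ : Measure S)
    [IsProbabilityMeasure μ] (g : S → ℝ) (hg : Integrable g μ)
    (hg2 : Integrable (fun s => g s ^ 2) μ) :
    (∫ s, g s ∂μ) ^ 2 ≤ ∫ s, g s ^ 2 ∂μ := by
  set m := ∫ s, g s ∂μ with hm
  have h0 : 0 ≤ ∫ s, (g s - m) ^ 2 ∂μ := integral_nonneg fun s => sq_nonneg _
  have hexp : (fun s => (g s - m) ^ 2) = fun s => (g s ^ 2 - 2 * m * g s) + m ^ 2 := by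
    funext s; ring
  have hsub : Integrable (fun s => g s ^ 2 - 2 * m * g s) μ := hg2.sub (hg.const_mul (2 * m))
  rw [hexp, integral_add hsub (integrable_const _),
      integral_sub hg2 (hg.const_mul (2 * m)), integral_const_mul, integral_const] at h0
  simp only [probReal_univ, one_smul] at h0
  nlinarith [h0]

/-- **Theorem D.1** (convergence rate for convex stochastic optimization under standard
Lipschitz continuity).  The algorithm is run for `K` steps on the product space
`Fin K → S` with the i.i.d. product measure: `X k` (representing `x^{k+1}`, `X 0 = x¹`)
depends only on the first `k` samples and `X (k+1)` minimizes the regularized model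
built at `X k` with the `k`-th sample, using the constant stepsize `γ = α√K`.  Then
`min_{1≤k≤K} E[ψ(x^k) - ψ(x*)] ≤ (1/(2√K))[‖x¹-x*‖²α + (L_f+L_ω)²/α]`. -/
theorem convex_rate_standard_lipschitz
    {n : ℕ} {S : Type*} [MeasurableSpace S] (μ : Measure S) [IsProbabilityMeasure μ]
    (f w ψ : EuclideanSpace ℝ (Fin n) → ℝ)
    (fmod : EuclideanSpace ℝ (Fin n) → EuclideanSpace ℝ (Fin n) → S → ℝ)
    (Lfs : S → ℝ) (Lf Lw α : ℝ)
    -- basic parameter assumptions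
    (hα : 0 < α) (hLf : 0 ≤ Lf) (hLw : 0 ≤ Lw)
    -- convex composite objective
    (hψdef : ∀ x, ψ x = f x + w x)
    (hf_conv : ConvexOn ℝ Set.univ f)
    (hw_conv : ConvexOn ℝ Set.univ w)
    (hw_lip : ∀ x y, |w x - w y| ≤ Lw * ‖x - y‖)
    -- properties of the stochastic model (with τ = 0)
    (hmodel_conv : ∀ x s, ConvexOn ℝ Set.univ (fun y => fmod x y s))
    (hmodel_int : ∀ x y, Integrable (fun s => fmod x y s) μ)
    (hmodel_center : ∀ x, ∫ s, fmod x x s ∂μ = f x)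
    (hmodel_under : ∀ x y, ∫ s, fmod x y s ∂μ ≤ f y)
    -- B1: standard Lipschitz continuity of the models
    (hB1 : ∀ x y z s, fmod x y s - fmod x z s ≤ Lfs s * ‖y - z‖)
    (hLfs_nonneg : ∀ s, 0 ≤ Lfs s)
    (hLfs_int : Integrable (fun s => Lfs s ^ 2) μ)
    (hLfs_bound : ∫ s, Lfs s ^ 2 ∂μ ≤ Lf ^ 2)
    -- an optimal solution
    (xstar : EuclideanSpace ℝ (Fin n)) (hxstar : ∀ y, ψ xstar ≤ ψ y)
    -- the algorithm: `K` iterations, i.i.d. samples, constant stepsize `α√K`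
    (K : ℕ) (hK : 1 ≤ K)
    (X : ℕ → (Fin K → S) → EuclideanSpace ℝ (Fin n))
    (x1 : EuclideanSpace ℝ (Fin n)) (hX0 : ∀ ω, X 0 ω = x1)
    (hXmeas : ∀ k, Measurable (X k))
    (hXadapt : ∀ k, ∀ ω ω' : Fin K → S,
      (∀ i : Fin K, (i : ℕ) < k → ω i = ω' i) → X k ω = X k ω')
    (hupdate : ∀ k (hk : k < K) (ω : Fin K → S) (y : EuclideanSpace ℝ (Fin n)),
      fmod (X k ω) (X (k + 1) ω) (ω ⟨k, hk⟩) + w (X (k + 1) ω)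
          + α * Real.sqrt K / 2 * ‖X (k + 1) ω - X k ω‖ ^ 2
        ≤ fmod (X k ω) y (ω ⟨k, hk⟩) + w y
          + α * Real.sqrt K / 2 * ‖y - X k ω‖ ^ 2)
    -- integrability of the relevant functionals of the iterates
    (hψint : ∀ k, Integrable (fun ω => ψ (X k ω)) (Measure.pi fun _ : Fin K => μ))
    (hdint : ∀ k, Integrable (fun ω => ‖X k ω - xstar‖ ^ 2)
      (Measure.pi fun _ : Fin K => μ)) :
    ∃ k < K,
      (∫ ω, (ψ (X k ω) - ψ xstar) ∂(Measure.pi fun _ : Fin K => μ))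
        ≤ 1 / (2 * Real.sqrt K)
            * (‖x1 - xstar‖ ^ 2 * α + (Lf + Lw) ^ 2 / α) := by
  -- basic facts
  have hSne : Nonempty S := by
    by_contra h
    rw [not_nonempty_iff] at h
    have h1 := measure_univ (μ := μ)
    rw [Set.univ_eq_empty_iff.mpr h, measure_empty] at h1
    exact zero_ne_one h1
  have hK0 : (0:ℝ) < K := by exact_mod_cast Nat.lt_of_lt_of_le Nat.zero_lt_one hK
  have hsk : 0 < Real.sqrt K := Real.sqrt_pos.mpr hK0
  have hsksq : Real.sqrt K * Real.sqrt K = (K:ℝ) := Real.mul_self_sqrt hK0.le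
  set γ : ℝ := α * Real.sqrt K with hγdef
  have hγ : 0 < γ := mul_pos hα hsk
  -- integrability facts about Lfs
  have hLfs_aesm : AEStronglyMeasurable Lfs μ := by
    have h1 : AEStronglyMeasurable (fun s => Real.sqrt (Lfs s ^ 2)) μ :=
      Real.continuous_sqrt.comp_aestronglyMeasurable hLfs_int.aestronglyMeasurable
    exact h1.congr (ae_of_all _ fun s => Real.sqrt_sq (hLfs_nonneg s))
  have hLfs_L1 : Integrable Lfs μ := by
    have hb : Integrable (fun s => (Lfs s ^ 2 + 1) / 2) μ :=
      (hLfs_int.add (integrable_const 1)).div_const 2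
    refine Integrable.mono' hb hLfs_aesm (ae_of_all _ fun s => ?_)
    rw [Real.norm_eq_abs, abs_of_nonneg (hLfs_nonneg s)]
    nlinarith [sq_nonneg (Lfs s - 1)]
  have hLfsLw2_int : Integrable (fun s => (Lfs s + Lw) ^ 2) μ := by
    have heq : (fun s => (Lfs s + Lw) ^ 2)
        = fun s => (Lfs s ^ 2 + 2 * Lw * Lfs s) + Lw ^ 2 := by funext s; ring
    rw [heq]
    exact (hLfs_int.add (hLfs_L1.const_mul _)).add (integrable_const _)
  have hLfs_mean : ∫ s, Lfs s ∂μ ≤ Lf := by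
    have h1 := aux_sq_int μ Lfs hLfs_L1 hLfs_int
    have h2 : 0 ≤ ∫ s, Lfs s ∂μ := integral_nonneg hLfs_nonneg
    nlinarith [le_trans h1 hLfs_bound]
  have hC : ∫ s, (Lfs s + Lw) ^ 2 ∂μ ≤ (Lf + Lw) ^ 2 := by
    have heq : (fun s => (Lfs s + Lw) ^ 2)
        = fun s => (Lfs s ^ 2 + 2 * Lw * Lfs s) + Lw ^ 2 := by funext s; ring
    have hI1 : Integrable (fun s => Lfs s ^ 2 + 2 * Lw * Lfs s) μ :=
      hLfs_int.add (hLfs_L1.const_mul _)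
    have hI2 : Integrable (fun s => 2 * Lw * Lfs s) μ := hLfs_L1.const_mul _
    rw [heq, integral_add hI1 (integrable_const _),
      integral_add hLfs_int hI2, integral_const_mul, integral_const]
    simp only [probReal_univ, one_smul]
    nlinarith [hLfs_bound, hLfs_mean]
  -- abbreviations
  set P : Measure (Fin K → S) := Measure.pi fun _ : Fin K => μ with hP
  set Pv : ℕ → ℝ := fun j => ∫ ω, ψ (X j ω) ∂P with hPvdef
  set Dv : ℕ → ℝ := fun j => ∫ ω, ‖X j ω - xstar‖ ^ 2 ∂P with hDvdef
  -- the key one-step estimate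
  have step : ∀ k, k < K →
      Pv k + γ / 2 * Dv (k + 1)
        ≤ ψ xstar + γ / 2 * Dv k + (Lf + Lw) ^ 2 / (2 * γ) := by
    intro k hk
    set myk : Fin K := ⟨k, hk⟩ with hmyk
    haveI : Unique {i : Fin K // i = myk} := ⟨⟨⟨myk, rfl⟩⟩, fun x => Subtype.ext x.2⟩
    set e := MeasurableEquiv.piEquivPiSubtypeProd (fun _ : Fin K => S) (fun i => i = myk)
      with he
    set fu := MeasurableEquiv.funUnique {i : Fin K // i = myk} S with hfu
    set T := e.trans (fu.prodCongr (MeasurableEquiv.refl ({i : Fin K // ¬ i = myk} → S)))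
      with hT
    set ν : Measure ({i : Fin K // ¬ i = myk} → S) := Measure.pi (fun _ => μ) with hν
    haveI : IsProbabilityMeasure ν := by infer_instance
    have hTpres : MeasurePreserving T P (μ.prod ν) := by
      have h1 := measurePreserving_piEquivPiSubtypeProd (fun _ : Fin K => μ) (fun i => i = myk)
      have h2 := (measurePreserving_funUnique μ {i : Fin K // i = myk}).prod
        (MeasurePreserving.id ν)
      have e1 : (Subtype.fintype (fun i : Fin K => i = myk))
          = (Unique.fintype : Fintype {i : Fin K // i = myk}) := Subsingleton.elim _ _
      rw [e1] at h1
      exact h2.comp h1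
    have hmap : Measure.map T.symm (μ.prod ν) = P := (MeasurePreserving.symm T hTpres).map_eq
    have hcoord : ∀ (s : S) (a : {i : Fin K // ¬ i = myk} → S) (i : Fin K) (h : ¬ i = myk),
        T.symm (s, a) i = a ⟨i, h⟩ := by
      intro s a i h
      simp [hT, he, hfu, MeasurableEquiv.piEquivPiSubtypeProd, MeasurableEquiv.funUnique,
        Equiv.piEquivPiSubtypeProd, h, MeasurableEquiv.trans, MeasurableEquiv.prodCongr,
        Equiv.funUnique]
    have hcoordk : ∀ (s : S) (a : {i : Fin K // ¬ i = myk} → S), T.symm (s, a) myk = s := by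
      intro s a
      simp [hT, he, hfu, MeasurableEquiv.piEquivPiSubtypeProd, MeasurableEquiv.funUnique,
        Equiv.piEquivPiSubtypeProd, MeasurableEquiv.trans, MeasurableEquiv.prodCongr,
        Equiv.funUnique]
    -- iterates up to time k do not depend on the k-th coordinate
    have hXfix : ∀ (j : ℕ), j ≤ k → ∀ (s s' : S) (a : {i : Fin K // ¬ i = myk} → S),
        X j (T.symm (s, a)) = X j (T.symm (s', a)) := by
      intro j hj s s' a
      apply hXadapt j
      intro i hi
      have hne : ¬ i = myk := by
        intro hcon
        have : (i : ℕ) = k := congrArg Fin.val hcon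
        omega
      rw [hcoord s a i hne, hcoord s' a i hne]
    -- transported integrability
    have hF1 : Integrable (fun z : S × ({i : Fin K // ¬ i = myk} → S) =>
        ψ (X k (T.symm z))) (μ.prod ν) :=
      (integrable_map_equiv T.symm fun ω => ψ (X k ω)).mp
        (hmap.symm ▸ hψint k)
    have hF2 : Integrable (fun z : S × ({i : Fin K // ¬ i = myk} → S) =>
        ‖X k (T.symm z) - xstar‖ ^ 2) (μ.prod ν) :=
      (integrable_map_equiv T.symm fun ω => ‖X k ω - xstar‖ ^ 2).mp
        (hmap.symm ▸ hdint k)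
    have hF3 : Integrable (fun z : S × ({i : Fin K // ¬ i = myk} → S) =>
        ‖X (k + 1) (T.symm z) - xstar‖ ^ 2) (μ.prod ν) :=
      (integrable_map_equiv T.symm fun ω => ‖X (k + 1) ω - xstar‖ ^ 2).mp
        (hmap.symm ▸ hdint (k + 1))
    have hv1 : ∫ ω, ψ (X k ω) ∂P = ∫ z, ψ (X k (T.symm z)) ∂(μ.prod ν) := by
      rw [← hmap, integral_map_equiv]
    have hv2 : ∫ ω, ‖X k ω - xstar‖ ^ 2 ∂P
        = ∫ z, ‖X k (T.symm z) - xstar‖ ^ 2 ∂(μ.prod ν) := by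
      rw [← hmap, integral_map_equiv]
    have hv3 : ∫ ω, ‖X (k + 1) ω - xstar‖ ^ 2 ∂P
        = ∫ z, ‖X (k + 1) (T.symm z) - xstar‖ ^ 2 ∂(μ.prod ν) := by
      rw [← hmap, integral_map_equiv]
    -- the pointwise (conditional-expectation) inequality
    have starineq : ∀ (a : {i : Fin K // ¬ i = myk} → S),
        Integrable (fun s => ‖X (k + 1) (T.symm (s, a)) - xstar‖ ^ 2) μ →
        (∫ s, ψ (X k (T.symm (s, a))) ∂μ)
            + γ / 2 * ∫ s, ‖X (k + 1) (T.symm (s, a)) - xstar‖ ^ 2 ∂μ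
          ≤ ψ xstar + γ / 2 * ∫ s, ‖X k (T.symm (s, a)) - xstar‖ ^ 2 ∂μ
            + (Lf + Lw) ^ 2 / (2 * γ) := by
      intro a ha
      obtain ⟨s₀⟩ := hSne
      obtain ⟨x, hxconst⟩ : ∃ x, ∀ s : S, X k (T.symm (s, a)) = x :=
        ⟨X k (T.symm (s₀, a)), fun s => hXfix k le_rfl s s₀ a⟩
      have hint1 : ∫ s, ψ (X k (T.symm (s, a))) ∂μ = ψ x := by
        simp only [hxconst]
        simp [measure_univ]
      have hint2 : ∫ s, ‖X k (T.symm (s, a)) - xstar‖ ^ 2 ∂μ = ‖x - xstar‖ ^ 2 := by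
        simp only [hxconst]
        simp [measure_univ]
      rw [hint1, hint2]
      -- pointwise inequality in s
      have star : ∀ s : S,
          fmod x x s + w x + γ / 2 * ‖X (k + 1) (T.symm (s, a)) - xstar‖ ^ 2
            ≤ fmod x xstar s + w xstar + γ / 2 * ‖x - xstar‖ ^ 2
              + (Lfs s + Lw) ^ 2 / (2 * γ) := by
        intro s
        have hup := hupdate k hk (T.symm (s, a))
        rw [hxconst s, show (T.symm (s, a)) ⟨k, hk⟩ = s from hcoordk s a] at hup
        obtain ⟨z, hzdef⟩ : ∃ z, X (k + 1) (T.symm (s, a)) = z := ⟨_, rfl⟩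
        rw [hzdef] at hup ⊢
        have hg' : ConvexOn ℝ Set.univ (fun y => fmod x y s + w y) :=
          (hmodel_conv x s).add hw_conv
        have hprox : fmod x z s + w z + γ / 2 * ‖z - x‖ ^ 2 + γ / 2 * ‖xstar - z‖ ^ 2
            ≤ fmod x xstar s + w xstar + γ / 2 * ‖xstar - x‖ ^ 2 :=
          aux_prox hg' hγ x z xstar (fun u => hup u)
        have e1 : ‖xstar - z‖ = ‖z - xstar‖ := norm_sub_rev _ _
        have e2 : ‖xstar - x‖ = ‖x - xstar‖ := norm_sub_rev _ _
        have e3 : ‖z - x‖ = ‖x - z‖ := norm_sub_rev _ _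
        rw [e1, e2, e3] at hprox
        have h2 := hB1 x x z s
        have h3 : w x - w z ≤ Lw * ‖x - z‖ := le_trans (le_abs_self _) (hw_lip x z)
        have h2γ : (0:ℝ) < 2 * γ := by linarith
        have h4 : (Lfs s + Lw) * ‖x - z‖ - γ / 2 * ‖x - z‖ ^ 2
            ≤ (Lfs s + Lw) ^ 2 / (2 * γ) := by
          rw [le_div_iff₀ h2γ]
          nlinarith [sq_nonneg (Lfs s + Lw - γ * ‖x - z‖)]
        linarith [hprox, h2, h3, h4]
      -- integrate over s
      have hJ1 : Integrable (fun s => fmod x x s + w x) μ :=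
        (hmodel_int x x).add (integrable_const _)
      have hJ2 : Integrable
          (fun s => γ / 2 * ‖X (k + 1) (T.symm (s, a)) - xstar‖ ^ 2) μ := ha.const_mul _
      have hJ3 : Integrable (fun s => fmod x xstar s + w xstar) μ :=
        (hmodel_int x xstar).add (integrable_const _)
      have hJ4 : Integrable (fun s => fmod x xstar s + w xstar + γ / 2 * ‖x - xstar‖ ^ 2) μ :=
        hJ3.add (integrable_const _)
      have hJ5 : Integrable (fun s => (Lfs s + Lw) ^ 2 / (2 * γ)) μ :=
        hLfsLw2_int.div_const _
      have hLint : Integrable (fun s => fmod x x s + w x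
          + γ / 2 * ‖X (k + 1) (T.symm (s, a)) - xstar‖ ^ 2) μ := hJ1.add hJ2
      have hRint : Integrable (fun s => fmod x xstar s + w xstar
          + γ / 2 * ‖x - xstar‖ ^ 2 + (Lfs s + Lw) ^ 2 / (2 * γ)) μ := hJ4.add hJ5
      have hmono := integral_mono hLint hRint star
      rw [integral_add hJ1 hJ2,
        integral_add (hmodel_int x x) (integrable_const _),
        integral_add hJ4 hJ5,
        integral_add hJ3 (integrable_const _),
        integral_add (hmodel_int x xstar) (integrable_const _),
        integral_const_mul, hmodel_center, integral_const, integral_const, integral_const,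
        integral_div] at hmono
      simp only [probReal_univ, one_smul] at hmono
      have hunder := hmodel_under x xstar
      have hCC : (∫ s, (Lfs s + Lw) ^ 2 ∂μ) / (2 * γ) ≤ (Lf + Lw) ^ 2 / (2 * γ) := by
        gcongr
      rw [hψdef x, hψdef xstar]
      linarith [hmono, hunder, hCC]
    -- a.e. version and outer integration
    have haein : ∀ᵐ a ∂ν,
        (∫ s, ψ (X k (T.symm (s, a))) ∂μ)
            + γ / 2 * ∫ s, ‖X (k + 1) (T.symm (s, a)) - xstar‖ ^ 2 ∂μ
          ≤ ψ xstar + γ / 2 * ∫ s, ‖X k (T.symm (s, a)) - xstar‖ ^ 2 ∂μ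
            + (Lf + Lw) ^ 2 / (2 * γ) := by
      filter_upwards [hF3.prod_left_ae] with a ha
      exact starineq a ha
    have hG1 : Integrable (fun a => ∫ s, ψ (X k (T.symm (s, a))) ∂μ) ν :=
      hF1.integral_prod_right
    have hG2 : Integrable (fun a => ∫ s, ‖X k (T.symm (s, a)) - xstar‖ ^ 2 ∂μ) ν :=
      hF2.integral_prod_right
    have hG3 : Integrable (fun a => ∫ s, ‖X (k + 1) (T.symm (s, a)) - xstar‖ ^ 2 ∂μ) ν :=
      hF3.integral_prod_right
    have hG2' : Integrable
        (fun a => γ / 2 * ∫ s, ‖X k (T.symm (s, a)) - xstar‖ ^ 2 ∂μ) ν := hG2.const_mul _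
    have hG3' : Integrable
        (fun a => γ / 2 * ∫ s, ‖X (k + 1) (T.symm (s, a)) - xstar‖ ^ 2 ∂μ) ν :=
      hG3.const_mul _
    have hLout : Integrable (fun a => (∫ s, ψ (X k (T.symm (s, a))) ∂μ)
        + γ / 2 * ∫ s, ‖X (k + 1) (T.symm (s, a)) - xstar‖ ^ 2 ∂μ) ν := hG1.add hG3'
    have hR1 : Integrable (fun a => ψ xstar
        + γ / 2 * ∫ s, ‖X k (T.symm (s, a)) - xstar‖ ^ 2 ∂μ) ν :=
      (integrable_const _).add hG2'
    have hRout : Integrable (fun a => ψ xstar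
        + γ / 2 * ∫ s, ‖X k (T.symm (s, a)) - xstar‖ ^ 2 ∂μ
        + (Lf + Lw) ^ 2 / (2 * γ)) ν := hR1.add (integrable_const _)
    have houter := integral_mono_ae hLout hRout haein
    rw [integral_add hG1 hG3',
      integral_add hR1 (integrable_const _),
      integral_add (integrable_const _) hG2',
      integral_const_mul, integral_const_mul, integral_const, integral_const] at houter
    simp only [probReal_univ, one_smul] at houter
    have hd1 : (∫ a, ∫ s, ψ (X k (T.symm (s, a))) ∂μ ∂ν) = Pv k :=
      (integral_prod_symm _ hF1).symm.trans hv1.symm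
    have hd2 : (∫ a, ∫ s, ‖X k (T.symm (s, a)) - xstar‖ ^ 2 ∂μ ∂ν) = Dv k :=
      (integral_prod_symm _ hF2).symm.trans hv2.symm
    have hd3 : (∫ a, ∫ s, ‖X (k + 1) (T.symm (s, a)) - xstar‖ ^ 2 ∂μ ∂ν) = Dv (k + 1) :=
      (integral_prod_symm _ hF3).symm.trans hv3.symm
    rw [hd1, hd2, hd3] at houter
    exact houter
  -- telescoping sum
  have hsum : ∑ k ∈ Finset.range K, (Pv k - ψ xstar)
      ≤ γ / 2 * (Dv 0 - Dv K) + K * ((Lf + Lw) ^ 2 / (2 * γ)) := by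
    have h1 : ∀ k ∈ Finset.range K, Pv k - ψ xstar
        ≤ (γ / 2 * (Dv k - Dv (k + 1)) + (Lf + Lw) ^ 2 / (2 * γ)) := by
      intro k hkm
      have := step k (Finset.mem_range.mp hkm)
      nlinarith [this]
    calc ∑ k ∈ Finset.range K, (Pv k - ψ xstar)
        ≤ ∑ k ∈ Finset.range K, (γ / 2 * (Dv k - Dv (k + 1)) + (Lf + Lw) ^ 2 / (2 * γ)) :=
          Finset.sum_le_sum h1
      _ = γ / 2 * (Dv 0 - Dv K) + K * ((Lf + Lw) ^ 2 / (2 * γ)) := by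
          rw [Finset.sum_add_distrib, ← Finset.mul_sum, Finset.sum_range_sub' Dv,
            Finset.sum_const, Finset.card_range, nsmul_eq_mul]
  have hDK : 0 ≤ Dv K := integral_nonneg fun ω => by positivity
  have hD0 : Dv 0 = ‖x1 - xstar‖ ^ 2 := by
    simp [hDvdef, hX0, measure_univ]
  set B : ℝ := γ / 2 * ‖x1 - xstar‖ ^ 2 + K * ((Lf + Lw) ^ 2 / (2 * γ)) with hB
  have hex : ∃ k ∈ Finset.range K, Pv k - ψ xstar ≤ B / K := by
    apply Finset.exists_le_of_sum_le (Finset.nonempty_range_iff.mpr (by omega))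
    calc ∑ k ∈ Finset.range K, (Pv k - ψ xstar)
        ≤ γ / 2 * (Dv 0 - Dv K) + K * ((Lf + Lw) ^ 2 / (2 * γ)) := hsum
      _ ≤ B := by rw [hB, hD0]; nlinarith [hDK, hγ]
      _ = ∑ _k ∈ Finset.range K, (B / K) := by
          rw [Finset.sum_const, Finset.card_range, nsmul_eq_mul]
          field_simp
  obtain ⟨k, hkm, hle⟩ := hex
  refine ⟨k, Finset.mem_range.mp hkm, ?_⟩
  have hint : ∫ ω, (ψ (X k ω) - ψ xstar) ∂P = Pv k - ψ xstar := by
    rw [integral_sub (hψint k) (integrable_const _), integral_const]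
    simp [measure_univ]
    rfl
  rw [hint]
  refine le_trans hle (le_of_eq ?_)
  rw [hB, hγdef]
  set sk : ℝ := Real.sqrt K with hskdef
  have hKc : (K:ℝ) = sk * sk := hsksq.symm
  rw [hKc]
  have hsk0 : sk ≠ 0 := ne_of_gt hsk
  have hα0 : α ≠ 0 := ne_of_gt hα
  field_simp
end
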